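/- arXiv:2512.23250 — 5 statements merged into one kernel-verified Lean document; each statement's English description precedes it below -/
import Mathlib

section
/- (Deterministic core of Theorem 1.) Let κ ≥ 1, λ ≥ 0, and let Σ* be a real symmetric p×p matrix with Σ* ∈ D_κ whose set of nonzero off-diagonal entries has cardinality at most s. Let Σ̃ be a real symmetric p×p matrix with max_{i,j} |Σ̃_{ij} − Σ*_{ij}| ≤ λ, and let Σ̂ be a minimizer over D_κ of F(Σ) = (1/2)‖Σ − Σ̃‖_F² + λ‖Σ‖_{1,off}. Then ‖Σ̂ − Σ*‖_F ≤ 2λ(2√s + √p). -/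
open Matrix BigOperators

/-- Frobenius norm of a real matrix. -/
noncomputable def frobNorm {p : ℕ} (A : Matrix (Fin p) (Fin p) ℝ) : ℝ :=
  Real.sqrt (∑ i, ∑ j, (A i j) ^ 2)

/-- Off-diagonal ℓ1 norm of a real matrix. -/
noncomputable def offL1 {p : ℕ} (A : Matrix (Fin p) (Fin p) ℝ) : ℝ :=
  ∑ i, ∑ j, if i ≠ j then |A i j| else 0

/-- The set `D_κ` of real symmetric positive semidefinite `p × p` matrices whose largest
eigenvalue is at most `κ` times their smallest eigenvalue. -/
noncomputable def Dset (κ : ℝ) (p : ℕ) : Set (Matrix (Fin p) (Fin p) ℝ) :=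
  {A | ∃ h : A.PosSemidef, (⨆ i, h.1.eigenvalues i) ≤ κ * (⨅ i, h.1.eigenvalues i)}

/-- Deterministic core of Theorem 1: if the pilot estimator is entrywise `λ`-close to the
truth `Σ*` (a member of `D_κ` with at most `s` nonzero off-diagonal entries), then any
minimizer of the RWS objective over `D_κ` satisfies `‖Σ̂ − Σ*‖_F ≤ 2λ(2√s + √p)`. -/theorem stmt2 (p s : ℕ) (κ lam : ℝ) (hκ : 1 ≤ κ) (hlam : 0 ≤ lam)
    (Sstar Stilde Shat : Matrix (Fin p) (Fin p) ℝ)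
    (hSstarSym : Sstar.IsHermitian) (hSstarD : Sstar ∈ Dset κ p)
    (hsparse : Set.ncard {ij : Fin p × Fin p | ij.1 ≠ ij.2 ∧ Sstar ij.1 ij.2 ≠ 0} ≤ s)
    (hStildeSym : Stilde.IsHermitian)
    (hclose : ∀ i j, |Stilde i j - Sstar i j| ≤ lam)
    (hmem : Shat ∈ Dset κ p)
    (hmin : ∀ S ∈ Dset κ p,
      (1 / 2) * (frobNorm (Shat - Stilde)) ^ 2 + lam * offL1 Shat ≤
        (1 / 2) * (frobNorm (S - Stilde)) ^ 2 + lam * offL1 S) :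
    frobNorm (Shat - Sstar) ≤ 2 * lam * (2 * Real.sqrt s + Real.sqrt p) := by
  classical
  set Δ : Matrix (Fin p) (Fin p) ℝ := Shat - Sstar with hΔ
  have frob_sq : ∀ X : Matrix (Fin p) (Fin p) ℝ,
      (frobNorm X) ^ 2 = ∑ ij : Fin p × Fin p, (X ij.1 ij.2) ^ 2 := by
    intro X
    rw [frobNorm, Real.sq_sqrt (by positivity), Fintype.sum_prod_type]
  have offL1_pair : ∀ X : Matrix (Fin p) (Fin p) ℝ,
      offL1 X = ∑ ij : Fin p × Fin p, (if ij.1 ≠ ij.2 then |X ij.1 ij.2| else 0) := by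
    intro X; rw [offL1, Fintype.sum_prod_type]
  set Q : ℝ := ∑ ij : Fin p × Fin p, (Δ ij.1 ij.2) ^ 2 with hQ
  set N : ℝ := frobNorm Δ with hN
  have hN0 : 0 ≤ N := Real.sqrt_nonneg _
  have hNQ : N ^ 2 = Q := frob_sq Δ
  -- the support set
  set T : Finset (Fin p × Fin p) :=
    Finset.univ.filter (fun ij => ij.1 ≠ ij.2 ∧ Sstar ij.1 ij.2 ≠ 0) with hTdef
  have hTcard : (T.card : ℝ) ≤ s := by
    have : {ij : Fin p × Fin p | ij.1 ≠ ij.2 ∧ Sstar ij.1 ij.2 ≠ 0}.ncard = T.card := by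
      rw [Set.ncard_eq_toFinset_card', Set.toFinset_setOf]
    exact_mod_cast this ▸ hsparse
  set Tc : Finset (Fin p × Fin p) :=
    Finset.univ.filter (fun ij => ij.1 ≠ ij.2 ∧ Sstar ij.1 ij.2 = 0) with hTcdef
  set Dg : Finset (Fin p × Fin p) :=
    Finset.univ.filter (fun ij => ij.1 = ij.2) with hDgdef
  have hDgcard : (Dg.card : ℝ) ≤ p := by
    have : Dg.card ≤ (Finset.univ : Finset (Fin p)).card := by
      apply Finset.card_le_card_of_injOn (fun ij => ij.1) (by simp)
      intro a ha b hb hab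
      simp only [hDgdef, Finset.coe_filter, Set.mem_setOf_eq, Finset.mem_univ, true_and]
        at ha hb
      exact Prod.ext hab (by rw [← ha, ← hb]; exact hab)
    simpa using (Nat.cast_le.mpr this : ((Dg.card : ℕ) : ℝ) ≤ _)
  -- basic inequality from optimality
  have hbasic := hmin Sstar hSstarD
  rw [frob_sq, frob_sq, offL1_pair, offL1_pair] at hbasic
  have expand : ∑ ij : Fin p × Fin p, ((Shat - Stilde) ij.1 ij.2) ^ 2
      = Q + 2 * (∑ ij : Fin p × Fin p, Δ ij.1 ij.2 * (Sstar ij.1 ij.2 - Stilde ij.1 ij.2))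
        + ∑ ij : Fin p × Fin p, ((Sstar - Stilde) ij.1 ij.2) ^ 2 := by
    rw [hQ, Finset.mul_sum, ← Finset.sum_add_distrib, ← Finset.sum_add_distrib]
    apply Finset.sum_congr rfl
    intro ij _
    simp only [hΔ, Matrix.sub_apply]
    ring
  -- step 1: (1/2) Q ≤ cross term + lam * (offL1 diff)
  have step1 : (1/2) * Q ≤
      (∑ ij : Fin p × Fin p, Δ ij.1 ij.2 * (Stilde ij.1 ij.2 - Sstar ij.1 ij.2))
      + lam * ((∑ ij : Fin p × Fin p, (if ij.1 ≠ ij.2 then |Sstar ij.1 ij.2| else 0))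
             - (∑ ij : Fin p × Fin p, (if ij.1 ≠ ij.2 then |Shat ij.1 ij.2| else 0))) := by
    have hneg : (∑ ij : Fin p × Fin p, Δ ij.1 ij.2 * (Stilde ij.1 ij.2 - Sstar ij.1 ij.2))
        = - ∑ ij : Fin p × Fin p, Δ ij.1 ij.2 * (Sstar ij.1 ij.2 - Stilde ij.1 ij.2) := by
      rw [← Finset.sum_neg_distrib]
      apply Finset.sum_congr rfl; intro ij _; ring
    rw [expand] at hbasic
    rw [hneg]
    nlinarith [hbasic]
  -- bound the cross term
  have cross_bound : (∑ ij : Fin p × Fin p, Δ ij.1 ij.2 * (Stilde ij.1 ij.2 - Sstar ij.1 ij.2))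
      ≤ lam * ∑ ij : Fin p × Fin p, |Δ ij.1 ij.2| := by
    rw [Finset.mul_sum]
    apply Finset.sum_le_sum
    intro ij _
    calc Δ ij.1 ij.2 * (Stilde ij.1 ij.2 - Sstar ij.1 ij.2)
        ≤ |Δ ij.1 ij.2 * (Stilde ij.1 ij.2 - Sstar ij.1 ij.2)| := le_abs_self _
      _ = |Δ ij.1 ij.2| * |Stilde ij.1 ij.2 - Sstar ij.1 ij.2| := abs_mul _ _
      _ ≤ |Δ ij.1 ij.2| * lam := by
          exact mul_le_mul_of_nonneg_left (hclose ij.1 ij.2) (abs_nonneg _)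
      _ = lam * |Δ ij.1 ij.2| := mul_comm _ _
  -- bound the off-diagonal penalty difference
  have off_bound : (∑ ij : Fin p × Fin p, (if ij.1 ≠ ij.2 then |Sstar ij.1 ij.2| else 0))
             - (∑ ij : Fin p × Fin p, (if ij.1 ≠ ij.2 then |Shat ij.1 ij.2| else 0))
      ≤ (∑ ij ∈ T, |Δ ij.1 ij.2|) - (∑ ij ∈ Tc, |Δ ij.1 ij.2|) := by
    have h1 : (∑ ij ∈ T, |Δ ij.1 ij.2|)
        = ∑ ij : Fin p × Fin p,
            (if ij.1 ≠ ij.2 ∧ Sstar ij.1 ij.2 ≠ 0 then |Δ ij.1 ij.2| else 0) := by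
      rw [hTdef, Finset.sum_filter]
    have h2 : (∑ ij ∈ Tc, |Δ ij.1 ij.2|)
        = ∑ ij : Fin p × Fin p,
            (if ij.1 ≠ ij.2 ∧ Sstar ij.1 ij.2 = 0 then |Δ ij.1 ij.2| else 0) := by
      rw [hTcdef, Finset.sum_filter]
    rw [h1, h2, ← Finset.sum_sub_distrib, ← Finset.sum_sub_distrib]
    apply Finset.sum_le_sum
    intro ij _
    by_cases hd : ij.1 = ij.2
    · simp [hd]
    by_cases hz : Sstar ij.1 ij.2 = 0
    · simp [hd, hz, hΔ, Matrix.sub_apply]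
    · simp only [hd, hz, ne_eq, not_false_eq_true, and_true, and_false, if_true, if_false]
      have : |Sstar ij.1 ij.2| - |Shat ij.1 ij.2| ≤ |Δ ij.1 ij.2| := by
        have := abs_sub_abs_le_abs_sub (Sstar ij.1 ij.2) (Shat ij.1 ij.2)
        have habs : |Sstar ij.1 ij.2 - Shat ij.1 ij.2| = |Δ ij.1 ij.2| := by
          rw [hΔ, Matrix.sub_apply, abs_sub_comm]
        linarith [habs ▸ this]
      linarith
  -- split the total ℓ1 norm of Δ
  have split : (∑ ij : Fin p × Fin p, |Δ ij.1 ij.2|)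
      = (∑ ij ∈ Dg, |Δ ij.1 ij.2|) + ((∑ ij ∈ T, |Δ ij.1 ij.2|) + (∑ ij ∈ Tc, |Δ ij.1 ij.2|)) := by
    rw [hDgdef, hTdef, hTcdef]
    rw [← Finset.sum_filter_add_sum_filter_not Finset.univ (fun ij : Fin p × Fin p => ij.1 = ij.2)]
    congr 1
    rw [← Finset.sum_filter_add_sum_filter_not
      (Finset.univ.filter (fun ij : Fin p × Fin p => ¬ ij.1 = ij.2))
      (fun ij => Sstar ij.1 ij.2 ≠ 0), Finset.filter_filter, Finset.filter_filter]
    congr 2 <;> · ext ij; simp [ne_eq, not_not] <;> tauto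
  -- Cauchy-Schwarz bounds
  have cs : ∀ (F : Finset (Fin p × Fin p)),
      (∑ ij ∈ F, |Δ ij.1 ij.2|) ≤ Real.sqrt F.card * N := by
    intro F
    have h1 : (∑ ij ∈ F, |Δ ij.1 ij.2|) ^ 2
        ≤ (F.card : ℝ) * ∑ ij ∈ F, (Δ ij.1 ij.2) ^ 2 := by
      have := Finset.sum_mul_sq_le_sq_mul_sq F (fun _ => (1 : ℝ)) (fun ij => |Δ ij.1 ij.2|)
      simpa [sq_abs] using this
    have h2 : (∑ ij ∈ F, (Δ ij.1 ij.2) ^ 2) ≤ Q := by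
      rw [hQ]
      exact Finset.sum_le_sum_of_subset_of_nonneg (Finset.subset_univ F)
        (fun _ _ _ => sq_nonneg _)
    have h3 : (∑ ij ∈ F, |Δ ij.1 ij.2|) ^ 2 ≤ (F.card : ℝ) * N ^ 2 := by
      rw [hNQ]; exact h1.trans (mul_le_mul_of_nonneg_left h2 (Nat.cast_nonneg _))
    have h4 : (0:ℝ) ≤ ∑ ij ∈ F, |Δ ij.1 ij.2| :=
      Finset.sum_nonneg fun _ _ => abs_nonneg _
    calc (∑ ij ∈ F, |Δ ij.1 ij.2|) = Real.sqrt ((∑ ij ∈ F, |Δ ij.1 ij.2|) ^ 2) := by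
          rw [Real.sqrt_sq h4]
      _ ≤ Real.sqrt ((F.card : ℝ) * N ^ 2) := Real.sqrt_le_sqrt h3
      _ = Real.sqrt F.card * N := by
          rw [Real.sqrt_mul (Nat.cast_nonneg _), Real.sqrt_sq hN0]
  have csT : (∑ ij ∈ T, |Δ ij.1 ij.2|) ≤ Real.sqrt s * N := by
    refine (cs T).trans (mul_le_mul_of_nonneg_right ?_ hN0)
    exact Real.sqrt_le_sqrt hTcard
  have csD : (∑ ij ∈ Dg, |Δ ij.1 ij.2|) ≤ Real.sqrt p * N := by
    refine (cs Dg).trans (mul_le_mul_of_nonneg_right ?_ hN0)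
    exact Real.sqrt_le_sqrt hDgcard
  -- combine
  have main : (1/2) * N ^ 2 ≤ lam * (Real.sqrt p * N + 2 * (Real.sqrt s * N)) := by
    rw [hNQ]
    have h1 : (1/2) * Q ≤ lam * ((∑ ij ∈ Dg, |Δ ij.1 ij.2|) + 2 * ∑ ij ∈ T, |Δ ij.1 ij.2|) := by
      have := step1
      have hc := cross_bound
      have ho := mul_le_mul_of_nonneg_left off_bound hlam
      rw [split] at hc
      nlinarith
    refine h1.trans ?_
    have hTc0 : (0:ℝ) ≤ ∑ ij ∈ T, |Δ ij.1 ij.2| := Finset.sum_nonneg fun _ _ => abs_nonneg _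
    apply mul_le_mul_of_nonneg_left _ hlam
    linarith
  -- conclude
  have hrhs : 0 ≤ 2 * lam * (2 * Real.sqrt s + Real.sqrt p) := by positivity
  rcases eq_or_lt_of_le hN0 with h | h
  · rw [← h]; exact hrhs
  · have h2 : ((1/2) * N) * N ≤ (lam * (Real.sqrt p + 2 * Real.sqrt s)) * N := by
      have e1 : ((1/2) * N) * N = (1/2) * N ^ 2 := by ring
      have e2 : (lam * (Real.sqrt p + 2 * Real.sqrt s)) * N
          = lam * (Real.sqrt p * N + 2 * (Real.sqrt s * N)) := by ring
      rw [e1, e2]; exact main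
    have h3 := le_of_mul_le_mul_right h2 h
    linarith
end

section
/- (Theorem 1.) Let κ ≥ 1, p ≥ 2, n ≥ 1, C₀ > 0, ε ∈ [0,1], and let Σ* be a real symmetric p×p matrix with Σ* ∈ D_κ whose set of nonzero off-diagonal entries has cardinality at most s. Let (Ω, 𝔉, P) be a probability space and Σ̃ : Ω → (real symmetric p×p matrices) a measurable map (the pilot estimator) satisfying P( max_{i,j} |Σ̃_{ij} − Σ*_{ij}| ≤ C₀·sqrt(log p / n) ) ≥ 1 − ε. Set λ = C₀·sqrt(log p / n) and for each ω let Σ̂(ω) be the unique minimizer over D_κ of (1/2)‖Σ − Σ̃(ω)‖_F² + λ‖Σ‖_{1,off}. Then P( ‖Σ̂ − Σ*‖_F ≤ 6·C₀·sqrt((s + p)·log p / n) ) ≥ 1 − ε. -/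
open Matrix BigOperators MeasureTheory

lemma cauchy_aux {p : ℕ} (Δ : Fin p × Fin p → ℝ) (U : Finset (Fin p × Fin p)) (m : ℕ)
    (hU : U.card ≤ m) :
    ∑ q ∈ U, |Δ q| ≤ Real.sqrt m * Real.sqrt (∑ q, (Δ q)^2) := by
  have h1 : (∑ q ∈ U, |Δ q|)^2 ≤ (m : ℝ) * ∑ q, (Δ q)^2 := by
    calc (∑ q ∈ U, |Δ q|)^2 ≤ U.card * ∑ q ∈ U, |Δ q|^2 := sq_sum_le_card_mul_sum_sq
    _ ≤ (m : ℝ) * ∑ q, (Δ q)^2 := by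
        apply mul_le_mul (by exact_mod_cast hU)
        · refine le_trans (le_of_eq ?_) (Finset.sum_le_sum_of_subset_of_nonneg (Finset.subset_univ U) (fun q _ _ => sq_nonneg _))
          exact Finset.sum_congr rfl fun q _ => sq_abs _
        · positivity
        · positivity
  have h2 : (0:ℝ) ≤ ∑ q ∈ U, |Δ q| := Finset.sum_nonneg fun q _ => abs_nonneg _
  calc ∑ q ∈ U, |Δ q| = Real.sqrt ((∑ q ∈ U, |Δ q|)^2) := (Real.sqrt_sq h2).symm
  _ ≤ Real.sqrt ((m:ℝ) * ∑ q, (Δ q)^2) := Real.sqrt_le_sqrt h1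
  _ = Real.sqrt m * Real.sqrt (∑ q, (Δ q)^2) := Real.sqrt_mul (by positivity) _

lemma key_lemma {p s : ℕ} (lam : ℝ) (hlam : 0 ≤ lam)
    (Sstar Stil Shat : Matrix (Fin p) (Fin p) ℝ)
    (hsparse : Set.ncard {ij : Fin p × Fin p | ij.1 ≠ ij.2 ∧ Sstar ij.1 ij.2 ≠ 0} ≤ s)
    (hE : ∀ i j, |Stil i j - Sstar i j| ≤ lam)
    (hmin : (1 / 2) * (frobNorm (Shat - Stil)) ^ 2 + lam * offL1 Shat ≤
        (1 / 2) * (frobNorm (Sstar - Stil)) ^ 2 + lam * offL1 Sstar) :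
    frobNorm (Shat - Sstar) ≤ 6 * lam * Real.sqrt (s + p) := by
  classical
  set Δ : Fin p × Fin p → ℝ := fun q => Shat q.1 q.2 - Sstar q.1 q.2 with hΔ
  set E : Fin p × Fin p → ℝ := fun q => Stil q.1 q.2 - Sstar q.1 q.2 with hEdef
  set F : ℝ := Real.sqrt (∑ q, (Δ q)^2) with hF
  have hFnn : 0 ≤ F := Real.sqrt_nonneg _
  have hF2 : F^2 = ∑ q, (Δ q)^2 := Real.sq_sqrt (by positivity)
  -- rewrite double sums as product sums
  have hsum : ∀ f : Fin p → Fin p → ℝ, (∑ i, ∑ j, f i j) = ∑ q : Fin p × Fin p, f q.1 q.2 := by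
    intro f
    rw [← Finset.univ_product_univ, Finset.sum_product]
  -- frobNorm facts
  have hfrobA : frobNorm (Shat - Sstar) = F := by
    rw [frobNorm, hF, hsum fun i j => ((Shat - Sstar) i j)^2]
    simp [hΔ, Matrix.sub_apply]
  -- support finset
  set T : Finset (Fin p × Fin p) := Finset.univ.filter (fun q => q.1 ≠ q.2 ∧ Sstar q.1 q.2 ≠ 0) with hT
  have hTcard : T.card ≤ s := by
    have : {ij : Fin p × Fin p | ij.1 ≠ ij.2 ∧ Sstar ij.1 ij.2 ≠ 0} = ↑T := by
      ext q; simp [hT]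
    rw [this, Set.ncard_coe_finset] at hsparse
    exact hsparse
  set Dg : Finset (Fin p × Fin p) := Finset.univ.filter (fun q => q.1 = q.2) with hDg
  have hDgcard : Dg.card ≤ p := by
    have hsub : Dg ⊆ Finset.univ.image (fun i : Fin p => (i, i)) := by
      intro q hq
      simp only [hDg, Finset.mem_filter] at hq
      simp only [Finset.mem_image]
      exact ⟨q.1, Finset.mem_univ _, by obtain ⟨a, b⟩ := q; have h : a = b := hq.2; subst h; rfl⟩
    calc Dg.card ≤ _ := Finset.card_le_card hsub
    _ ≤ (Finset.univ : Finset (Fin p)).card := Finset.card_image_le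
    _ = p := by simp
  -- basic inequality
  have hexp : ∑ q, (Δ q - E q)^2 = ∑ q, (Δ q)^2 - 2 * ∑ q, Δ q * E q + ∑ q, (E q)^2 := by
    rw [Finset.mul_sum, ← Finset.sum_sub_distrib, ← Finset.sum_add_distrib]
    exact Finset.sum_congr rfl fun q _ => by ring
  have hbasic : (1/2) * ∑ q, (Δ q)^2 ≤ ∑ q, Δ q * E q + lam * (offL1 Sstar - offL1 Shat) := by
    have h1 : (frobNorm (Shat - Stil))^2 = ∑ q, (Δ q - E q)^2 := by
      rw [frobNorm, Real.sq_sqrt (by positivity), hsum fun i j => ((Shat - Stil) i j)^2]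
      exact Finset.sum_congr rfl fun q _ => by simp only [hΔ, hEdef, Matrix.sub_apply]; ring
    have h2 : (frobNorm (Sstar - Stil))^2 = ∑ q, (E q)^2 := by
      rw [frobNorm, Real.sq_sqrt (by positivity), hsum fun i j => ((Sstar - Stil) i j)^2]
      exact Finset.sum_congr rfl fun q _ => by simp only [hEdef, Matrix.sub_apply]; ring
    rw [h1, h2, hexp] at hmin
    linarith
  -- bound ∑ Δ E
  have hDE : ∑ q, Δ q * E q ≤ lam * ∑ q, |Δ q| := by
    rw [Finset.mul_sum]
    apply Finset.sum_le_sum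
    intro q _
    calc Δ q * E q ≤ |Δ q * E q| := le_abs_self _
    _ = |Δ q| * |E q| := abs_mul _ _
    _ ≤ |Δ q| * lam := mul_le_mul_of_nonneg_left (hE q.1 q.2) (abs_nonneg _)
    _ = lam * |Δ q| := mul_comm _ _
  -- off-diagonal decomposition
  set Off : Finset (Fin p × Fin p) := Finset.univ.filter (fun q => q.1 ≠ q.2) with hOff
  have hoffL1 : ∀ A : Matrix (Fin p) (Fin p) ℝ, offL1 A = ∑ q ∈ Off, |A q.1 q.2| := by
    intro A
    rw [offL1, hsum fun i j => if i ≠ j then |A i j| else 0, hOff]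
    rw [Finset.sum_filter]
  have hoffbound : offL1 Sstar - offL1 Shat ≤ ∑ q ∈ T, |Δ q| - ∑ q ∈ Off \ T, |Δ q| := by
    have hTOff : T ⊆ Off := fun q hq => by
      simp only [hT, hOff, Finset.mem_filter] at *
      exact ⟨hq.1, hq.2.1⟩
    rw [hoffL1, hoffL1, ← Finset.sum_sub_distrib,
        ← Finset.sum_sdiff hTOff (f := fun q => |Sstar q.1 q.2| - |Shat q.1 q.2|)]
    have hA : ∑ q ∈ Off \ T, (|Sstar q.1 q.2| - |Shat q.1 q.2|) = - ∑ q ∈ Off \ T, |Δ q| := by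
      rw [← Finset.sum_neg_distrib]
      apply Finset.sum_congr rfl
      intro q hq
      have hz : Sstar q.1 q.2 = 0 := by
        rcases Finset.mem_sdiff.mp hq with ⟨h1, h2⟩
        simp only [hOff, Finset.mem_filter] at h1
        simp only [hT, Finset.mem_filter] at h2
        by_contra hne
        exact h2 ⟨Finset.mem_univ _, h1.2, hne⟩
      simp [hΔ, hz]
    have hB : ∑ q ∈ T, (|Sstar q.1 q.2| - |Shat q.1 q.2|) ≤ ∑ q ∈ T, |Δ q| := by
      apply Finset.sum_le_sum
      intro q _
      have := abs_sub_abs_le_abs_sub (Sstar q.1 q.2) (Shat q.1 q.2)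
      have h' : |Sstar q.1 q.2 - Shat q.1 q.2| = |Δ q| := by
        rw [hΔ]; rw [abs_sub_comm]
      linarith [h' ▸ this]
    linarith [hA, hB]
  -- decompose total ℓ1
  have hTOff : T ⊆ Off := fun q hq => by
    simp only [hT, hOff, Finset.mem_filter] at *
    exact ⟨hq.1, hq.2.1⟩
  have hsplit : ∑ q, |Δ q| = ∑ q ∈ Dg, |Δ q| + (∑ q ∈ Off \ T, |Δ q| + ∑ q ∈ T, |Δ q|) := by
    have h1 : (Finset.univ : Finset (Fin p × Fin p)) = Dg ∪ Off := by
      ext q; simp [hDg, hOff]; tauto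
    have h2 : Disjoint Dg Off := by
      rw [Finset.disjoint_filter]
      tauto
    rw [h1, Finset.sum_union h2, Finset.sum_sdiff hTOff]
  -- combine
  have hmain : (1/2) * F^2 ≤ lam * (∑ q ∈ Dg, |Δ q| + 2 * ∑ q ∈ T, |Δ q|) := by
    rw [hF2]
    calc (1/2) * ∑ q, (Δ q)^2 ≤ ∑ q, Δ q * E q + lam * (offL1 Sstar - offL1 Shat) := hbasic
    _ ≤ lam * ∑ q, |Δ q| + lam * (∑ q ∈ T, |Δ q| - ∑ q ∈ Off \ T, |Δ q|) := by
        have := mul_le_mul_of_nonneg_left hoffbound hlam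
        linarith [hDE]
    _ = lam * (∑ q ∈ Dg, |Δ q| + 2 * ∑ q ∈ T, |Δ q|) := by
        rw [hsplit]; ring
  -- Cauchy–Schwarz
  have hCd : ∑ q ∈ Dg, |Δ q| ≤ Real.sqrt p * F := cauchy_aux Δ Dg p hDgcard
  have hCt : ∑ q ∈ T, |Δ q| ≤ Real.sqrt s * F := cauchy_aux Δ T s hTcard
  have hsq : Real.sqrt p + 2 * Real.sqrt s ≤ 3 * Real.sqrt (s + p) := by
    have h1 : Real.sqrt p ≤ Real.sqrt (s + p) := Real.sqrt_le_sqrt (by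
      linarith [Nat.cast_nonneg (α := ℝ) s])
    have h2 : Real.sqrt s ≤ Real.sqrt (s + p) := Real.sqrt_le_sqrt (by
      linarith [Nat.cast_nonneg (α := ℝ) p])
    linarith
  have hfin : (1/2) * F^2 ≤ 3 * lam * Real.sqrt (s + p) * F := by
    calc (1/2) * F^2 ≤ lam * (∑ q ∈ Dg, |Δ q| + 2 * ∑ q ∈ T, |Δ q|) := hmain
    _ ≤ lam * ((Real.sqrt p + 2 * Real.sqrt s) * F) := by
        apply mul_le_mul_of_nonneg_left _ hlam
        nlinarith [hCd, hCt]
    _ ≤ lam * (3 * Real.sqrt (s + p) * F) := by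
        apply mul_le_mul_of_nonneg_left _ hlam
        exact mul_le_mul_of_nonneg_right hsq hFnn
    _ = 3 * lam * Real.sqrt (s + p) * F := by ring
  rw [hfrobA]
  rcases eq_or_lt_of_le hFnn with h0 | h0
  · rw [← h0]; positivity
  · nlinarith [hfin]

/-- Theorem 1: with probability at least `1 − ε` (the probability with which the pilot
estimator satisfies the entrywise concentration bound), the RWS estimator with
`λ = C₀ √(log p / n)` satisfies `‖Σ̂ − Σ*‖_F ≤ 6 C₀ √((s+p) log p / n)`. -/
theorem stmt3 (p s n : ℕ) (hp : 2 ≤ p) (hn : 1 ≤ n) (κ C₀ ε : ℝ) (hκ : 1 ≤ κ)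
    (hC₀ : 0 < C₀) (hε0 : 0 ≤ ε) (hε1 : ε ≤ 1)
    (Sstar : Matrix (Fin p) (Fin p) ℝ)
    (hSstarSym : Sstar.IsHermitian) (hSstarD : Sstar ∈ Dset κ p)
    (hsparse : Set.ncard {ij : Fin p × Fin p | ij.1 ≠ ij.2 ∧ Sstar ij.1 ij.2 ≠ 0} ≤ s)
    (Ω : Type*) [MeasurableSpace Ω] (P : Measure Ω) [IsProbabilityMeasure P]
    (Stilde : Ω → Matrix (Fin p) (Fin p) ℝ)
    (hStildeSym : ∀ ω, (Stilde ω).IsHermitian)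
    (hStildeMeas : ∀ i j, Measurable fun ω => Stilde ω i j)
    (hconc : ENNReal.ofReal (1 - ε) ≤
      P {ω | ∀ i j, |Stilde ω i j - Sstar i j| ≤ C₀ * Real.sqrt (Real.log p / n)})
    (lam : ℝ) (hlam : lam = C₀ * Real.sqrt (Real.log p / n))
    (Shat : Ω → Matrix (Fin p) (Fin p) ℝ)
    (hShatMem : ∀ ω, Shat ω ∈ Dset κ p)
    (hShatMin : ∀ ω, ∀ S ∈ Dset κ p,
      (1 / 2) * (frobNorm (Shat ω - Stilde ω)) ^ 2 + lam * offL1 (Shat ω) ≤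
        (1 / 2) * (frobNorm (S - Stilde ω)) ^ 2 + lam * offL1 S)
    (hShatUnique : ∀ ω, ∀ S ∈ Dset κ p,
      (∀ S' ∈ Dset κ p,
        (1 / 2) * (frobNorm (S - Stilde ω)) ^ 2 + lam * offL1 S ≤
          (1 / 2) * (frobNorm (S' - Stilde ω)) ^ 2 + lam * offL1 S') → S = Shat ω) :
    ENNReal.ofReal (1 - ε) ≤
      P {ω | frobNorm (Shat ω - Sstar) ≤
        6 * C₀ * Real.sqrt ((s + p) * Real.log p / n)} := by
  have hlam0 : 0 ≤ lam := by
    rw [hlam]; positivity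
  apply le_trans hconc
  apply measure_mono
  intro ω hω
  simp only [Set.mem_setOf_eq] at hω ⊢
  have hkey := key_lemma lam hlam0 Sstar (Stilde ω) (Shat ω) hsparse
    (fun i j => hlam ▸ hω i j) (hShatMin ω Sstar hSstarD)
  refine le_trans hkey (le_of_eq ?_)
  rw [hlam]
  rw [show ((s : ℝ) + p) * Real.log p / n = ((s : ℝ) + p) * (Real.log p / n) by ring,
    Real.sqrt_mul (by positivity)]
  ring
end

section
/- (Diagonal form of Proposition 1, case γ̂_p > 0 and γ̂₁/γ̂_p > κ.) Let κ ≥ 1 and let γ̂₁ ≥ γ̂₂ ≥ … ≥ γ̂_p > 0 be real numbers with γ̂₁ > κ·γ̂_p. Suppose integers α, β with 1 ≤ α < β ≤ p and the real number ν* = ( κ·Σ_{i=1}^{α} γ̂ᵢ + Σ_{i=β}^{p} γ̂ᵢ ) / ( α·κ² + p − β + 1 ) satisfy γ̂_α ≥ κ·ν* > γ̂_{α+1} and γ̂_{β−1} > ν* ≥ γ̂_β. Define x* ∈ ℝ^p by x*ᵢ = κ·ν* for 1 ≤ i ≤ α, x*ᵢ = γ̂ᵢ for α < i < β, and x*ᵢ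 = ν* for β ≤ i ≤ p. Then for every x ∈ ℝ^p with xᵢ > 0 for all i and max_i xᵢ ≤ κ·min_i xᵢ, one has Σ_{i=1}^{p} (x*ᵢ − γ̂ᵢ)² ≤ Σ_{i=1}^{p} (xᵢ − γ̂ᵢ)². -/
open BigOperators Finset

/-- Diagonal form of Proposition 1 (case `γ̂_p > 0`, `γ̂₁/γ̂_p > κ`): the vector `x*`
obtained by truncating the top `α` eigenvalues to `κν*` and the bottom `p − β + 1`
eigenvalues to `ν*` minimizes the squared distance to `(γ̂ᵢ)` over all positive vectors
whose largest entry is at most `κ` times the smallest. -/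
theorem stmt13 (p : ℕ) (κ : ℝ) (hκ : 1 ≤ κ) (γ : ℕ → ℝ)
    (hdec : ∀ i j, 1 ≤ i → i ≤ j → j ≤ p → γ j ≤ γ i)
    (hpos : 0 < γ p) (hspread : κ * γ p < γ 1)
    (α β : ℕ) (hα1 : 1 ≤ α) (hαβ : α < β) (hβp : β ≤ p)
    (νstar : ℝ)
    (hν : νstar = (κ * (∑ i ∈ Finset.Icc 1 α, γ i) + ∑ i ∈ Finset.Icc β p, γ i) /
      ((α : ℝ) * κ ^ 2 + (p : ℝ) - (β : ℝ) + 1))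
    (hfenceα : κ * νstar ≤ γ α) (hfenceα' : γ (α + 1) < κ * νstar)
    (hfenceβ : νstar < γ (β - 1)) (hfenceβ' : γ β ≤ νstar)
    (xstar : ℕ → ℝ)
    (hxstar : ∀ i, 1 ≤ i → i ≤ p →
      xstar i = if i ≤ α then κ * νstar else if i < β then γ i else νstar) :
    ∀ x : ℕ → ℝ, (∀ i, 1 ≤ i → i ≤ p → 0 < x i) →
      (∀ i j, 1 ≤ i → i ≤ p → 1 ≤ j → j ≤ p → x i ≤ κ * x j) →
      ∑ i ∈ Finset.Icc 1 p, (xstar i - γ i) ^ 2 ≤ ∑ i ∈ Finset.Icc 1 p, (x i - γ i) ^ 2 := by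
  intro x hxpos hxratio
  have hαp : α ≤ p := le_trans (le_of_lt hαβ) hβp
  have hp1 : 1 ≤ p := le_trans hα1 hαp
  have hne : (Finset.Icc 1 p).Nonempty := ⟨1, by simp [hp1]⟩
  obtain ⟨i0, hi0mem, hi0⟩ := Finset.exists_mem_eq_inf' hne x
  set t := (Finset.Icc 1 p).inf' hne x with ht
  have hi01 : 1 ≤ i0 := (Finset.mem_Icc.mp hi0mem).1
  have hi0p : i0 ≤ p := (Finset.mem_Icc.mp hi0mem).2
  have htmin : ∀ i, 1 ≤ i → i ≤ p → t ≤ x i := by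
    intro i h1 h2
    exact Finset.inf'_le x (Finset.mem_Icc.mpr ⟨h1, h2⟩)
  have htmax : ∀ i, 1 ≤ i → i ≤ p → x i ≤ κ * t := by
    intro i h1 h2
    have := hxratio i i0 h1 h2 hi01 hi0p
    rw [← hi0] at this
    exact this
  -- notation for the inner-product terms
  set f : ℕ → ℝ := fun i => (xstar i - γ i) * (x i - xstar i) with hf
  -- split Icc 1 p = Ioc 0 p into three Ioc pieces
  have hIcc : Finset.Icc 1 p = Finset.Ioc 0 p := by
    ext i; simp [Nat.lt_iff_add_one_le]
  have hβ1 : α ≤ β - 1 := by omega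
  have hβ1p : β - 1 ≤ p := by omega
  have hsplit1 : ∑ i ∈ Finset.Ioc 0 α, f i + ∑ i ∈ Finset.Ioc α p, f i
      = ∑ i ∈ Finset.Ioc 0 p, f i :=
    Finset.sum_Ioc_consecutive f (Nat.zero_le α) hαp
  have hsplit2 : ∑ i ∈ Finset.Ioc α (β - 1), f i + ∑ i ∈ Finset.Ioc (β - 1) p, f i
      = ∑ i ∈ Finset.Ioc α p, f i :=
    Finset.sum_Ioc_consecutive f hβ1 hβ1p
  -- Ioc 0 α = Icc 1 α, Ioc (β-1) p = Icc β p
  have hI1 : Finset.Ioc 0 α = Finset.Icc 1 α := by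
    ext i; simp [Nat.lt_iff_add_one_le]
  have hI2 : Finset.Ioc (β - 1) p = Finset.Icc β p := by
    ext i; simp only [Finset.mem_Ioc, Finset.mem_Icc]; omega
  -- middle sum is zero
  have hmid : ∑ i ∈ Finset.Ioc α (β - 1), f i = 0 := by
    apply Finset.sum_eq_zero
    intro i hi
    rw [Finset.mem_Ioc] at hi
    have h1 : 1 ≤ i := by omega
    have h2 : i ≤ p := by omega
    have hx := hxstar i h1 h2
    rw [if_neg (by omega), if_pos (by omega)] at hx
    simp [hf, hx]
  -- γ bounds on the blocks
  have hγtop : ∀ i ∈ Finset.Icc 1 α, κ * νstar ≤ γ i := by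
    intro i hi
    rw [Finset.mem_Icc] at hi
    exact le_trans hfenceα (hdec i α hi.1 hi.2 hαp)
  have hγbot : ∀ i ∈ Finset.Icc β p, γ i ≤ νstar := by
    intro i hi
    rw [Finset.mem_Icc] at hi
    exact le_trans (hdec β i (by omega) hi.1 hi.2) hfenceβ'
  -- top block lower bound
  have htop : ∑ i ∈ Finset.Icc 1 α, (κ * νstar - γ i) * (κ * t - κ * νstar)
      ≤ ∑ i ∈ Finset.Icc 1 α, f i := by
    apply Finset.sum_le_sum
    intro i hi
    rw [Finset.mem_Icc] at hi
    have hx := hxstar i hi.1 (le_trans hi.2 hαp)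
    rw [if_pos hi.2] at hx
    have h1 : κ * νstar - γ i ≤ 0 := by linarith [hγtop i (Finset.mem_Icc.mpr hi)]
    have h2 : x i ≤ κ * t := htmax i hi.1 (le_trans hi.2 hαp)
    simp only [hf, hx]
    nlinarith
  -- bottom block lower bound
  have hbot : ∑ i ∈ Finset.Icc β p, (νstar - γ i) * (t - νstar)
      ≤ ∑ i ∈ Finset.Icc β p, f i := by
    apply Finset.sum_le_sum
    intro i hi
    rw [Finset.mem_Icc] at hi
    have h1i : 1 ≤ i := by omega
    have hx := hxstar i h1i hi.2
    rw [if_neg (by omega), if_neg (by omega)] at hx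
    have h1 : 0 ≤ νstar - γ i := by linarith [hγbot i (Finset.mem_Icc.mpr hi)]
    have h2 : t ≤ x i := htmin i h1i hi.2
    simp only [hf, hx]
    nlinarith
  -- evaluate the two constant-bound sums
  have hcard1 : (Finset.Icc 1 α).card = α := by simp
  have hcard2 : (Finset.Icc β p).card = p - β + 1 := by
    rw [Nat.card_Icc]; omega
  have hsum1 : ∑ i ∈ Finset.Icc 1 α, (κ * νstar - γ i) * (κ * t - κ * νstar)
      = ((α : ℝ) * (κ * νstar) - ∑ i ∈ Finset.Icc 1 α, γ i) * (κ * t - κ * νstar) := by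
    rw [← Finset.sum_mul, Finset.sum_sub_distrib, Finset.sum_const, hcard1, nsmul_eq_mul]
  have hsum2 : ∑ i ∈ Finset.Icc β p, (νstar - γ i) * (t - νstar)
      = (((p : ℝ) - (β : ℝ) + 1) * νstar - ∑ i ∈ Finset.Icc β p, γ i) * (t - νstar) := by
    rw [← Finset.sum_mul, Finset.sum_sub_distrib, Finset.sum_const, hcard2, nsmul_eq_mul]
    have : ((p - β + 1 : ℕ) : ℝ) = (p : ℝ) - (β : ℝ) + 1 := by
      rw [Nat.cast_add, Nat.cast_sub hβp, Nat.cast_one]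
    rw [this]
  -- the two constant bounds sum to exactly zero, by the definition of νstar
  have hβR : (β : ℝ) ≤ (p : ℝ) := by exact_mod_cast hβp
  have hαR : (1 : ℝ) ≤ (α : ℝ) := by exact_mod_cast hα1
  have hD : (0:ℝ) < (α : ℝ) * κ ^ 2 + (p : ℝ) - (β : ℝ) + 1 := by nlinarith
  have hνD : νstar * ((α : ℝ) * κ ^ 2 + (p : ℝ) - (β : ℝ) + 1)
      = κ * (∑ i ∈ Finset.Icc 1 α, γ i) + ∑ i ∈ Finset.Icc β p, γ i := by
    rw [hν]; exact div_mul_cancel₀ _ hD.ne'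
  have hzero : ((α : ℝ) * (κ * νstar) - ∑ i ∈ Finset.Icc 1 α, γ i) * (κ * t - κ * νstar)
      + (((p : ℝ) - (β : ℝ) + 1) * νstar - ∑ i ∈ Finset.Icc β p, γ i) * (t - νstar) = 0 := by
    linear_combination (t - νstar) * hνD
  -- key: nonnegative inner product
  have hkey : 0 ≤ ∑ i ∈ Finset.Icc 1 p, f i := by
    rw [hIcc, ← hsplit1, ← hsplit2, hmid, hI1, hI2]
    have h1 := htop
    have h2 := hbot
    rw [hsum1] at h1
    rw [hsum2] at h2
    linarith
  -- expand the squares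
  have hexp : ∑ i ∈ Finset.Icc 1 p, (x i - γ i) ^ 2
      = ∑ i ∈ Finset.Icc 1 p, ((xstar i - γ i) ^ 2 + 2 * f i + (x i - xstar i) ^ 2) := by
    apply Finset.sum_congr rfl
    intro i _
    simp only [hf]; ring
  rw [hexp, Finset.sum_add_distrib, Finset.sum_add_distrib]
  have hsq : 0 ≤ ∑ i ∈ Finset.Icc 1 p, (x i - xstar i) ^ 2 :=
    Finset.sum_nonneg fun i _ => sq_nonneg _
  have h2f : 0 ≤ ∑ i ∈ Finset.Icc 1 p, 2 * f i := by
    rw [← Finset.mul_sum]; linarith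
  linarith
end

section
/- (Proposition 1, case γ̂_p > 0 and γ̂₁/γ̂_p > κ, matrix form.) Let κ ≥ 1 and let 𝒴 = U·diag(γ̂₁,…,γ̂_p)·Uᵀ be a real symmetric p×p matrix, where U is orthogonal and γ̂₁ ≥ γ̂₂ ≥ … ≥ γ̂_p > 0 with γ̂₁ > κ·γ̂_p. Suppose integers α, β with 1 ≤ α < β ≤ p and ν* = ( κ·Σ_{i=1}^{α} γ̂ᵢ + Σ_{i=β}^{p} γ̂ᵢ ) / ( α·κ² + p − β + 1 ) satisfy γ̂_α ≥ κ·ν* > γ̂_{α+1} and γ̂_{β−1} > ν* ≥ γ̂_β. Let Γ* = diag(κν*,…,κν*, γ̂_{α+1},…,γ̂_{β−1}, ν*,…,ν*) (with α leading entries κν* and p−β+1 trailing entries ν*) and Y* = U·Γ*·Uᵀ. Then Y* ∈ D_κ and ‖Y* − 𝒴‖_F ≤ ‖Y − 𝒴‖_F for every Y ∈ D_κ; that is, Y* is the projection of 𝒴 onto the condition-number-constrained positive semidefinite cone. -/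
open Matrix BigOperators Finset

lemma psd_diag_nonneg {p : ℕ} {B : Matrix (Fin p) (Fin p) ℝ} (h : B.PosSemidef) (i : Fin p) :
    0 ≤ B i i := by
  have := h.dotProduct_mulVec_nonneg (Pi.single i 1)
  simpa [dotProduct, mulVec, Pi.single_apply, Finset.mul_sum] using this

lemma eig_ge_of_psd {p : ℕ} {A : Matrix (Fin p) (Fin p) ℝ} (hA : A.IsHermitian) {c : ℝ}
    (h : (A - c • (1 : Matrix (Fin p) (Fin p) ℝ)).PosSemidef) (i : Fin p) :
    c ≤ hA.eigenvalues i := by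
  set v : Fin p → ℝ := ⇑(hA.eigenvectorBasis i) with hv
  have hvne : v ≠ 0 := by
    intro h0; apply hA.eigenvectorBasis.orthonormal.ne_zero i; ext j; simpa [hv] using congrFun h0 j
  have hnn : 0 ≤ v ⬝ᵥ v := Finset.sum_nonneg fun j _ => mul_self_nonneg _
  have hpos : 0 < v ⬝ᵥ v :=
    lt_of_le_of_ne hnn (Ne.symm (fun h0 => hvne (dotProduct_self_eq_zero.mp h0)))
  have h2 := h.dotProduct_mulVec_nonneg v
  have hAv : A *ᵥ v = hA.eigenvalues i • v := hA.mulVec_eigenvectorBasis i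
  have hsv : star v = v := by funext j; simp
  rw [sub_mulVec, smul_mulVec, one_mulVec, hAv, hsv, dotProduct_sub,
    dotProduct_smul, dotProduct_smul] at h2
  simp only [smul_eq_mul] at h2
  nlinarith

lemma eig_le_of_psd {p : ℕ} {A : Matrix (Fin p) (Fin p) ℝ} (hA : A.IsHermitian) {c : ℝ}
    (h : ((c • (1 : Matrix (Fin p) (Fin p) ℝ)) - A).PosSemidef) (i : Fin p) :
    hA.eigenvalues i ≤ c := by
  set v : Fin p → ℝ := ⇑(hA.eigenvectorBasis i) with hv
  have hvne : v ≠ 0 := by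
    intro h0; apply hA.eigenvectorBasis.orthonormal.ne_zero i; ext j; simpa [hv] using congrFun h0 j
  have hnn : 0 ≤ v ⬝ᵥ v := Finset.sum_nonneg fun j _ => mul_self_nonneg _
  have hpos : 0 < v ⬝ᵥ v :=
    lt_of_le_of_ne hnn (Ne.symm (fun h0 => hvne (dotProduct_self_eq_zero.mp h0)))
  have h2 := h.dotProduct_mulVec_nonneg v
  have hAv : A *ᵥ v = hA.eigenvalues i • v := hA.mulVec_eigenvectorBasis i
  have hsv : star v = v := by funext j; simp
  rw [sub_mulVec, smul_mulVec, one_mulVec, hAv, hsv, dotProduct_sub,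
    dotProduct_smul, dotProduct_smul] at h2
  simp only [smul_eq_mul] at h2
  nlinarith

lemma psd_sub_smul {p : ℕ} {A : Matrix (Fin p) (Fin p) ℝ} (hA : A.IsHermitian) {c : ℝ}
    (h : ∀ i, c ≤ hA.eigenvalues i) :
    (A - c • (1 : Matrix (Fin p) (Fin p) ℝ)).PosSemidef := by
  set V : Matrix (Fin p) (Fin p) ℝ := (hA.eigenvectorUnitary : Matrix (Fin p) (Fin p) ℝ) with hV
  have hVV : V * star V = 1 := (Matrix.mem_unitaryGroup_iff).mp hA.eigenvectorUnitary.2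
  have hst : A = V * diagonal hA.eigenvalues * star V := by simpa using hA.spectral_theorem
  have key : A - c • (1 : Matrix (Fin p) (Fin p) ℝ)
      = V * diagonal (fun i => hA.eigenvalues i - c) * star V := by
    have h1 : diagonal (fun i => hA.eigenvalues i - c)
        = diagonal hA.eigenvalues - c • (1 : Matrix (Fin p) (Fin p) ℝ) := by
      rw [smul_one_eq_diagonal, diagonal_sub]
    rw [h1, Matrix.mul_sub, Matrix.sub_mul, ← hst]
    congr 1
    rw [Matrix.mul_smul, Matrix.smul_mul, Matrix.mul_one, hVV]
  rw [key, Matrix.star_eq_conjTranspose V]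
  exact Matrix.PosSemidef.mul_mul_conjTranspose_same
    (Matrix.PosSemidef.diagonal fun i => sub_nonneg.mpr (h i)) V

lemma psd_smul_sub {p : ℕ} {A : Matrix (Fin p) (Fin p) ℝ} (hA : A.IsHermitian) {c : ℝ}
    (h : ∀ i, hA.eigenvalues i ≤ c) :
    ((c • (1 : Matrix (Fin p) (Fin p) ℝ)) - A).PosSemidef := by
  set V : Matrix (Fin p) (Fin p) ℝ := (hA.eigenvectorUnitary : Matrix (Fin p) (Fin p) ℝ) with hV
  have hVV : V * star V = 1 := (Matrix.mem_unitaryGroup_iff).mp hA.eigenvectorUnitary.2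
  have hst : A = V * diagonal hA.eigenvalues * star V := by simpa using hA.spectral_theorem
  have key : (c • (1 : Matrix (Fin p) (Fin p) ℝ)) - A
      = V * diagonal (fun i => c - hA.eigenvalues i) * star V := by
    have h1 : diagonal (fun i => c - hA.eigenvalues i)
        = c • (1 : Matrix (Fin p) (Fin p) ℝ) - diagonal hA.eigenvalues := by
      rw [smul_one_eq_diagonal, diagonal_sub]
    rw [h1, Matrix.mul_sub, Matrix.sub_mul, ← hst]
    congr 1
    rw [Matrix.mul_smul, Matrix.smul_mul, Matrix.mul_one, hVV]
  rw [key, Matrix.star_eq_conjTranspose V]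
  exact Matrix.PosSemidef.mul_mul_conjTranspose_same
    (Matrix.PosSemidef.diagonal fun i => sub_nonneg.mpr (h i)) V

lemma inner_eq_trace {p : ℕ} (A B : Matrix (Fin p) (Fin p) ℝ) :
    ∑ i, ∑ j, A i j * B i j = Matrix.trace (Aᵀ * B) := by
  rw [Matrix.trace]
  simp only [Matrix.diag, Matrix.mul_apply, Matrix.transpose_apply]
  rw [Finset.sum_comm]

lemma trace_conj {p : ℕ} (U M : Matrix (Fin p) (Fin p) ℝ) (h : Uᵀ * U = 1) :
    Matrix.trace (U * M * Uᵀ) = Matrix.trace M := by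
  rw [Matrix.trace_mul_cycle, h, Matrix.one_mul]

lemma trace_mul_diag {p : ℕ} (M : Matrix (Fin p) (Fin p) ℝ) (d : Fin p → ℝ) :
    Matrix.trace (M * diagonal d) = ∑ i, M i i * d i := by
  rw [Matrix.trace]
  simp [Matrix.diag, Matrix.mul_diagonal]

lemma sum_shift {p : ℕ} (f : ℕ → ℝ) :
    ∑ i : Fin p, f (i.1 + 1) = ∑ n ∈ Finset.Ioc 0 p, f n := by
  have h1 : Finset.Ioc 0 p = Finset.Ico 1 (p + 1) := by
    rw [Finset.Ico_add_one_right_eq_Icc, ← Finset.Icc_add_one_left_eq_Ioc, zero_add]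
  rw [h1, Finset.sum_Ico_eq_sum_range, Fin.sum_univ_eq_sum_range (fun n => f (n + 1))]
  simp [add_comm]

set_option maxHeartbeats 1600000 in
/-- Proposition 1 (case `γ̂_p > 0`, `γ̂₁/γ̂_p > κ`), matrix form: with
`𝒴 = U diag(γ̂₁,…,γ̂_p) Uᵀ` and `Γ*` obtained by truncating the top `α` eigenvalues to
`κν*` and the bottom `p − β + 1` eigenvalues to `ν*`, the matrix `Y* = U Γ* Uᵀ` is the
projection of `𝒴` onto the condition-number-constrained positive semidefinite cone `D_κ`. -/
theorem stmt14 (p : ℕ) (κ : ℝ) (hκ : 1 ≤ κ) (γ : ℕ → ℝ)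
    (hdec : ∀ i j, 1 ≤ i → i ≤ j → j ≤ p → γ j ≤ γ i)
    (hpos : 0 < γ p) (hspread : κ * γ p < γ 1)
    (U 𝒴 : Matrix (Fin p) (Fin p) ℝ)
    (hU : U ∈ Matrix.orthogonalGroup (Fin p) ℝ)
    (h𝒴 : 𝒴 = U * Matrix.diagonal (fun i : Fin p => γ (i.1 + 1)) * Uᵀ)
    (α β : ℕ) (hα1 : 1 ≤ α) (hαβ : α < β) (hβp : β ≤ p)
    (νstar : ℝ)
    (hν : νstar = (κ * (∑ i ∈ Finset.Icc 1 α, γ i) + ∑ i ∈ Finset.Icc β p, γ i) /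
      ((α : ℝ) * κ ^ 2 + (p : ℝ) - (β : ℝ) + 1))
    (hfenceα : κ * νstar ≤ γ α) (hfenceα' : γ (α + 1) < κ * νstar)
    (hfenceβ : νstar < γ (β - 1)) (hfenceβ' : γ β ≤ νstar)
    (Γstar Ystar : Matrix (Fin p) (Fin p) ℝ)
    (hΓ : Γstar = Matrix.diagonal (fun i : Fin p =>
      if i.1 + 1 ≤ α then κ * νstar else if i.1 + 1 < β then γ (i.1 + 1) else νstar))
    (hYstar : Ystar = U * Γstar * Uᵀ) :
    Ystar ∈ Dset κ p ∧ ∀ Y ∈ Dset κ p, frobNorm (Ystar - 𝒴) ≤ frobNorm (Y - 𝒴) := by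
  classical
  have hβ1 : 1 ≤ β := le_trans hα1 hαβ.le
  have hαp : α ≤ p := le_trans hαβ.le hβp
  have hp1 : 1 ≤ p := le_trans hβ1 hβp
  haveI : Nonempty (Fin p) := ⟨⟨0, by omega⟩⟩
  have hκ0 : (0:ℝ) < κ := lt_of_lt_of_le one_pos hκ
  have hγpos : ∀ n, 1 ≤ n → n ≤ p → 0 < γ n := fun n h1 h2 =>
    lt_of_lt_of_le hpos (hdec n p h1 h2 le_rfl)
  have hDpos : (0:ℝ) < (α : ℝ) * κ ^ 2 + (p : ℝ) - (β : ℝ) + 1 := by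
    have h1 : (1:ℝ) ≤ (α:ℝ) := by exact_mod_cast hα1
    have h2 : (β:ℝ) ≤ (p:ℝ) := by exact_mod_cast hβp
    nlinarith
  have hνpos : 0 < νstar := by
    rw [hν]
    apply div_pos _ hDpos
    apply add_pos (mul_pos hκ0 _)
    · exact Finset.sum_pos (fun n hn => hγpos n (le_trans hβ1 (Finset.mem_Icc.mp hn).1)
        (Finset.mem_Icc.mp hn).2) ⟨β, Finset.mem_Icc.mpr ⟨le_rfl, hβp⟩⟩
    · exact Finset.sum_pos (fun n hn => hγpos n (Finset.mem_Icc.mp hn).1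
        (le_trans (Finset.mem_Icc.mp hn).2 hαp)) ⟨1, Finset.mem_Icc.mpr ⟨le_rfl, hα1⟩⟩
  have hkey : κ * (∑ i ∈ Finset.Icc 1 α, γ i) + ∑ i ∈ Finset.Icc β p, γ i
      = νstar * ((α : ℝ) * κ ^ 2 + (p : ℝ) - (β : ℝ) + 1) := by
    rw [hν, div_mul_cancel₀]
    exact ne_of_gt hDpos
  have hU1 : U * Uᵀ = 1 := by
    have := (Matrix.mem_orthogonalGroup_iff (Fin p) ℝ).mp hU
    exact this
  have hU2 : Uᵀ * U = 1 := by
    have := (Matrix.mem_orthogonalGroup_iff' (Fin p) ℝ).mp hU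
    exact this
  have hUH : Uᴴ = Uᵀ := by rw [conjTranspose_eq_transpose_of_trivial]
  set cf : Fin p → ℝ := fun i : Fin p =>
    if i.1 + 1 ≤ α then κ * νstar else if i.1 + 1 < β then γ (i.1 + 1) else νstar with hcf
  set g : Fin p → ℝ := fun i : Fin p => γ (i.1 + 1) with hg
  have hΓdiag : Γstar = diagonal cf := hΓ
  have h𝒴diag : 𝒴 = U * diagonal g * Uᵀ := h𝒴
  have hclb : ∀ i, νstar ≤ cf i := by
    intro i
    simp only [hcf]
    split_ifs with h1 h2
    · nlinarith
    · have hb : i.1 + 1 ≤ β - 1 := by omega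
      exact le_of_lt (lt_of_lt_of_le hfenceβ (hdec (i.1+1) (β-1) (by omega) hb (by omega)))
    · exact le_rfl
  have hcub : ∀ i, cf i ≤ κ * νstar := by
    intro i
    simp only [hcf]
    split_ifs with h1 h2
    · exact le_rfl
    · exact le_of_lt (lt_of_le_of_lt
        (hdec (α+1) (i.1+1) (by omega) (by omega) (by omega)) hfenceα')
    · nlinarith
  have hc0 : ∀ i, 0 ≤ cf i := fun i => le_trans hνpos.le (hclb i)
  -- conjugation helpers
  have hconj : ∀ (c : ℝ), U * (c • (1 : Matrix (Fin p) (Fin p) ℝ)) * Uᵀ = c • 1 := by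
    intro c
    rw [Matrix.mul_smul, Matrix.mul_one, Matrix.smul_mul, hU1]
  have conjPSD : ∀ (d : Fin p → ℝ), (∀ i, 0 ≤ d i) → (U * diagonal d * Uᵀ).PosSemidef := by
    intro d hd
    rw [← hUH]
    exact (Matrix.PosSemidef.diagonal hd).mul_mul_conjTranspose_same U
  have conj_sub : ∀ (A : Matrix (Fin p) (Fin p) ℝ) (d : Fin p → ℝ) (c : ℝ),
      A = U * diagonal d * Uᵀ →
      A - c • (1 : Matrix (Fin p) (Fin p) ℝ) = U * diagonal (fun i => d i - c) * Uᵀ := by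
    intro A d c hA
    have h1 : diagonal (fun i => d i - c)
        = diagonal d - c • (1 : Matrix (Fin p) (Fin p) ℝ) := by
      rw [smul_one_eq_diagonal, diagonal_sub]
    rw [hA, h1, Matrix.mul_sub, Matrix.sub_mul, hconj c]
  have conj_sub' : ∀ (A : Matrix (Fin p) (Fin p) ℝ) (d : Fin p → ℝ) (c : ℝ),
      A = U * diagonal d * Uᵀ →
      c • (1 : Matrix (Fin p) (Fin p) ℝ) - A = U * diagonal (fun i => c - d i) * Uᵀ := by
    intro A d c hA
    have h1 : diagonal (fun i => c - d i)
        = c • (1 : Matrix (Fin p) (Fin p) ℝ) - diagonal d := by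
      rw [smul_one_eq_diagonal, diagonal_sub]
    rw [hA, h1, Matrix.mul_sub, Matrix.sub_mul, hconj c]
  have hYstarPSD : Ystar.PosSemidef := by
    rw [hYstar, hΓdiag]
    exact conjPSD cf hc0
  have hYs_lb : (Ystar - νstar • (1 : Matrix (Fin p) (Fin p) ℝ)).PosSemidef := by
    rw [conj_sub Ystar cf νstar (by rw [hYstar, hΓdiag])]
    exact conjPSD _ (fun i => sub_nonneg.mpr (hclb i))
  have hYs_ub : ((κ * νstar) • (1 : Matrix (Fin p) (Fin p) ℝ) - Ystar).PosSemidef := by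
    rw [conj_sub' Ystar cf (κ * νstar) (by rw [hYstar, hΓdiag])]
    exact conjPSD _ (fun i => sub_nonneg.mpr (hcub i))
  have hmem : Ystar ∈ Dset κ p := by
    refine ⟨hYstarPSD, ?_⟩
    have hub := fun i => eig_le_of_psd hYstarPSD.1 hYs_ub i
    have hlb := fun i => eig_ge_of_psd hYstarPSD.1 hYs_lb i
    have h1 : (⨆ i, hYstarPSD.1.eigenvalues i) ≤ κ * νstar := ciSup_le hub
    have h2 : νstar ≤ ⨅ i, hYstarPSD.1.eigenvalues i := le_ciInf hlb
    exact le_trans h1 (mul_le_mul_of_nonneg_left h2 hκ0.le)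
  refine ⟨hmem, ?_⟩
  intro Y hYmem
  obtain ⟨hYpsd, hYcond⟩ := hYmem
  set m : ℝ := ⨅ i, hYpsd.1.eigenvalues i with hm
  have hm_le : ∀ i, m ≤ hYpsd.1.eigenvalues i := fun i =>
    ciInf_le (Set.Finite.bddBelow (Set.finite_range _)) i
  have hub' : ∀ i, hYpsd.1.eigenvalues i ≤ κ * m := fun i =>
    le_trans (le_ciSup (Set.Finite.bddAbove (Set.finite_range _)) i) hYcond
  have hYm : (Y - m • (1 : Matrix (Fin p) (Fin p) ℝ)).PosSemidef := psd_sub_smul hYpsd.1 hm_le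
  have hYM : ((κ * m) • (1 : Matrix (Fin p) (Fin p) ℝ) - Y).PosSemidef :=
    psd_smul_sub hYpsd.1 hub'
  set Z : Matrix (Fin p) (Fin p) ℝ := Uᵀ * Y * U with hZdef
  have hconj' : ∀ (c : ℝ), Uᵀ * (c • (1 : Matrix (Fin p) (Fin p) ℝ)) * U = c • 1 := by
    intro c
    rw [Matrix.mul_smul, Matrix.mul_one, Matrix.smul_mul, hU2]
  have hYZ : U * Z * Uᵀ = Y := by
    rw [hZdef, ← Matrix.mul_assoc, ← Matrix.mul_assoc, hU1, Matrix.one_mul,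
      Matrix.mul_assoc, hU1, Matrix.mul_one]
  have hZm : (Z - m • (1 : Matrix (Fin p) (Fin p) ℝ)).PosSemidef := by
    have h1 : Z - m • (1 : Matrix (Fin p) (Fin p) ℝ)
        = Uᵀ * (Y - m • (1 : Matrix (Fin p) (Fin p) ℝ)) * U := by
      rw [hZdef, Matrix.mul_sub, Matrix.sub_mul, hconj' m]
    rw [h1, ← hUH]
    exact hYm.conjTranspose_mul_mul_same U
  have hZM : ((κ * m) • (1 : Matrix (Fin p) (Fin p) ℝ) - Z).PosSemidef := by
    have h1 : (κ * m) • (1 : Matrix (Fin p) (Fin p) ℝ) - Z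
        = Uᵀ * ((κ * m) • (1 : Matrix (Fin p) (Fin p) ℝ) - Y) * U := by
      rw [hZdef, Matrix.mul_sub, Matrix.sub_mul, hconj' (κ * m)]
    rw [h1, ← hUH]
    exact hYM.conjTranspose_mul_mul_same U
  have hZlb : ∀ i, m ≤ Z i i := by
    intro i
    have h0 := psd_diag_nonneg hZm i
    simp only [Matrix.sub_apply, Matrix.smul_apply, Matrix.one_apply_eq, smul_eq_mul,
      mul_one] at h0
    linarith
  have hZub : ∀ i, Z i i ≤ κ * m := by
    intro i
    have h0 := psd_diag_nonneg hZM i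
    simp only [Matrix.sub_apply, Matrix.smul_apply, Matrix.one_apply_eq, smul_eq_mul,
      mul_one] at h0
    linarith
  -- key termwise estimate
  set ψ : ℕ → ℝ := fun n =>
    if n ≤ α then κ * (γ n - κ * νstar) else if n < β then 0 else γ n - νstar with hψ
  have hterm : ∀ i : Fin p, (νstar - m) * ψ (i.1 + 1) ≤ (Z i i - cf i) * (cf i - g i) := by
    intro i
    have hip : i.1 + 1 ≤ p := by omega
    simp only [hcf, hψ, hg]
    split_ifs with h1 h2
    · -- top block
      have hgα : κ * νstar ≤ γ (i.1 + 1) :=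
        le_trans hfenceα (hdec (i.1+1) α (by omega) h1 hαp)
      have hz := hZub i
      nlinarith
    · -- middle block
      simp
    · -- bottom block
      have hgβ : γ (i.1 + 1) ≤ νstar :=
        le_trans (hdec β (i.1+1) hβ1 (by omega) hip) hfenceβ'
      have hz := hZlb i
      nlinarith
  -- the sum of ψ vanishes
  have hIcc1 : Finset.Icc 1 α = Finset.Ioc 0 α := Finset.Icc_add_one_left_eq_Ioc 0 α
  have hIccβ : Finset.Icc β p = Finset.Ioc (β-1) p := by
    conv_lhs => rw [show β = β - 1 + 1 from by omega]
    exact Finset.Icc_add_one_left_eq_Ioc _ _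
  have e1 : ∑ n ∈ Finset.Ioc 0 α, ψ n
      = κ * (∑ n ∈ Finset.Icc 1 α, γ n) - (α:ℝ) * (κ^2 * νstar) := by
    rw [← hIcc1]
    have hco : ∀ n ∈ Finset.Icc 1 α, ψ n = κ * γ n - κ^2 * νstar := by
      intro n hn
      simp only [hψ]
      rw [if_pos (Finset.mem_Icc.mp hn).2]
      ring
    rw [Finset.sum_congr rfl hco, Finset.sum_sub_distrib, ← Finset.mul_sum,
      Finset.sum_const, Nat.card_Icc]
    simp only [Nat.add_sub_cancel, nsmul_eq_mul]
    try ring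
  have e2 : ∑ n ∈ Finset.Ioc α (β-1), ψ n = 0 := by
    apply Finset.sum_eq_zero
    intro n hn
    have hn' := Finset.mem_Ioc.mp hn
    simp only [hψ]
    rw [if_neg (by omega), if_pos (by omega)]
  have e3 : ∑ n ∈ Finset.Ioc (β-1) p, ψ n
      = (∑ n ∈ Finset.Icc β p, γ n) - ((p:ℝ) - (β:ℝ) + 1) * νstar := by
    rw [← hIccβ]
    have hco : ∀ n ∈ Finset.Icc β p, ψ n = γ n - νstar := by
      intro n hn
      have hn' := Finset.mem_Icc.mp hn
      simp only [hψ]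
      rw [if_neg (by omega), if_neg (by omega)]
    rw [Finset.sum_congr rfl hco, Finset.sum_sub_distrib, Finset.sum_const, Nat.card_Icc]
    have hcast : ((p + 1 - β : ℕ) : ℝ) = (p:ℝ) - (β:ℝ) + 1 := by
      have hble : β ≤ p + 1 := by omega
      push_cast [hble]
      ring
    rw [nsmul_eq_mul, hcast]
  have hψ0 : ∑ i : Fin p, ψ (i.1 + 1) = 0 := by
    rw [sum_shift ψ]
    have s1 : ∑ n ∈ Finset.Ioc 0 α, ψ n + ∑ n ∈ Finset.Ioc α p, ψ n
        = ∑ n ∈ Finset.Ioc 0 p, ψ n := Finset.sum_Ioc_consecutive ψ (Nat.zero_le α) hαp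
    have s2 : ∑ n ∈ Finset.Ioc α (β-1), ψ n + ∑ n ∈ Finset.Ioc (β-1) p, ψ n
        = ∑ n ∈ Finset.Ioc α p, ψ n := Finset.sum_Ioc_consecutive ψ (by omega) (by omega)
    rw [← s1, ← s2, e1, e2, e3]
    linear_combination hkey
  have hsum_nonneg : 0 ≤ ∑ i : Fin p, (Z i i - cf i) * (cf i - g i) := by
    have h1 := Finset.sum_le_sum (fun i (_ : i ∈ Finset.univ) => hterm i)
    have h2 : ∑ i : Fin p, (νstar - m) * ψ (i.1 + 1) = 0 := by
      rw [← Finset.mul_sum, hψ0, mul_zero]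
    linarith
  -- inner product nonnegativity
  have hE : Y - Ystar = U * (Z - Γstar) * Uᵀ := by
    rw [Matrix.mul_sub, Matrix.sub_mul, hYZ, ← hYstar]
  have hF : Ystar - 𝒴 = U * (Γstar - diagonal g) * Uᵀ := by
    rw [Matrix.mul_sub, Matrix.sub_mul, ← hYstar, ← h𝒴diag]
  have hinner : 0 ≤ ∑ i, ∑ j, (Y - Ystar) i j * (Ystar - 𝒴) i j := by
    rw [inner_eq_trace, hE, hF]
    have hcanc : ∀ X : Matrix (Fin p) (Fin p) ℝ, Uᵀ * (U * X) = X := by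
      intro X
      rw [← Matrix.mul_assoc, hU2, Matrix.one_mul]
    have htr : (U * (Z - Γstar) * Uᵀ)ᵀ * (U * (Γstar - diagonal g) * Uᵀ)
        = U * ((Z - Γstar)ᵀ * (Γstar - diagonal g)) * Uᵀ := by
      rw [Matrix.transpose_mul, Matrix.transpose_mul, Matrix.transpose_transpose]
      simp only [Matrix.mul_assoc]
      rw [hcanc]
    rw [htr, trace_conj U _ hU2]
    have hΓD : Γstar - diagonal g = diagonal (fun i => cf i - g i) := by
      rw [hΓdiag, diagonal_sub]
    rw [hΓD, trace_mul_diag]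
    have hdi : ∀ i ∈ Finset.univ, ((Z - Γstar)ᵀ) i i * (cf i - g i)
        = (Z i i - cf i) * (cf i - g i) := by
      intro i _
      rw [Matrix.transpose_apply, Matrix.sub_apply, hΓdiag, Matrix.diagonal_apply_eq]
    rw [Finset.sum_congr rfl hdi]
    exact hsum_nonneg
  -- conclude with the Frobenius norm comparison
  rw [frobNorm, frobNorm]
  apply Real.sqrt_le_sqrt
  have key : ∑ i, ∑ j, ((Y - 𝒴) i j)^2 - ∑ i, ∑ j, ((Ystar - 𝒴) i j)^2
      = ∑ i, ∑ j, (((Y - Ystar) i j)^2 + 2*((Y - Ystar) i j * (Ystar - 𝒴) i j)) := by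
    rw [← Finset.sum_sub_distrib]
    apply Finset.sum_congr rfl
    intro i _
    rw [← Finset.sum_sub_distrib]
    apply Finset.sum_congr rfl
    intro j _
    simp only [Matrix.sub_apply]
    ring
  have hRHS : 0 ≤ ∑ i, ∑ j, (((Y - Ystar) i j)^2 + 2*((Y - Ystar) i j * (Ystar - 𝒴) i j)) := by
    have h1 : ∑ i, ∑ j, (((Y - Ystar) i j)^2 + 2*((Y - Ystar) i j * (Ystar - 𝒴) i j))
        = (∑ i, ∑ j, ((Y - Ystar) i j)^2)
          + 2 * ∑ i, ∑ j, (Y - Ystar) i j * (Ystar - 𝒴) i j := by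
      simp_rw [Finset.sum_add_distrib, ← Finset.mul_sum]
    rw [h1]
    have h2 : 0 ≤ ∑ i, ∑ j, ((Y - Ystar) i j)^2 :=
      Finset.sum_nonneg fun i _ => Finset.sum_nonneg fun j _ => sq_nonneg _
    linarith
  linarith
end

section
/- (Theorem 2: global convergence of the alternating direction algorithm.) Let κ ≥ 1, λ ≥ 0, μ > 0, and let Σ̃ be a real symmetric p×p matrix. Let (Σ⁰, Y⁰, Λ⁰) be arbitrary real symmetric p×p matrices, and let the sequence (Σᵏ, Yᵏ, Λᵏ)_{k≥0} be generated by: (i) Yᵏ⁺¹ is a minimizer over D_κ of Y ↦ ‖Y − (Σᵏ + μΛᵏ)‖_F; (ii) Σᵏ⁺¹ is the unique minimizer over real symmetric matrices of Σ ↦ (1/2)‖Σ − Σ̃‖_F² + λ‖Σ‖_{1,off} + ⟨Σ − Yᵏ⁺¹, Λᵏ⟩ + (1/(2μ))‖Σ − Yᵏ⁺¹‖_F²; (iii) Λᵏ⁺¹ = Λᵏ + (1/μ)(Σᵏ⁺¹ − Yᵏ⁺¹). Then Σᵏ and Yᵏ both converge in Frobenius norm to the unique minimizer Σ̂* over D_κ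 of (1/2)‖Σ − Σ̃‖_F² + λ‖Σ‖_{1,off}. -/
open Matrix BigOperators Filter

/-- Trace inner product `⟨A, B⟩ = tr(Aᵀ B)` on real matrices. -/
noncomputable def trInner {p : ℕ} (A B : Matrix (Fin p) (Fin p) ℝ) : ℝ :=
  (Aᵀ * B).trace

open scoped RealInnerProductSpace

/-! ### Auxiliary Hilbert-space lemmas -/

section AuxVec

variable {F : Type*} [NormedAddCommGroup F] [InnerProductSpace ℝ F]

lemma ADMM_quad_id (u v : F) (t : ℝ) :
    ‖u + t • (v - u)‖ ^ 2 = (1 - t) * ‖u‖ ^ 2 + t * ‖v‖ ^ 2 - t * (1 - t) * ‖u - v‖ ^ 2 := by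
  rw [norm_add_sq_real, real_inner_smul_right, inner_sub_right, real_inner_self_eq_norm_sq,
    norm_smul, Real.norm_eq_abs, mul_pow, sq_abs, norm_sub_sq_real v u, norm_sub_sq_real u v,
    real_inner_comm v u]
  ring

lemma ADMM_proj_ineq {D : Set F} (hD : Convex ℝ D) {y b : F} (hy : y ∈ D)
    (hmin : ∀ w ∈ D, ‖y - b‖ ≤ ‖w - b‖) {w : F} (hw : w ∈ D) :
    ⟪b - y, w - y⟫ ≤ 0 := by
  by_contra hq
  push_neg at hq
  have hwy : (0:ℝ) < ‖w - y‖ ^ 2 + 1 := by positivity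
  set q : ℝ := ⟪b - y, w - y⟫ with hqdef
  set t : ℝ := min 1 (q / (‖w - y‖ ^ 2 + 1)) with htdef
  have ht0 : 0 < t := lt_min one_pos (div_pos hq hwy)
  have ht1 : t ≤ 1 := min_le_left _ _
  have hz : y + t • (w - y) ∈ D := by
    have h := hD hy hw (by linarith : (0:ℝ) ≤ 1 - t) (le_of_lt ht0) (by ring)
    have e : (1 - t) • y + t • w = y + t • (w - y) := by module
    rwa [e] at h
  have hle := hmin _ hz
  have hsq : ‖y - b‖ ^ 2 ≤ ‖y + t • (w - y) - b‖ ^ 2 :=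
    pow_le_pow_left₀ (norm_nonneg _) hle 2
  have hexp : ‖y + t • (w - y) - b‖ ^ 2
      = ‖y - b‖ ^ 2 - 2 * t * q + t ^ 2 * ‖w - y‖ ^ 2 := by
    have e : y + t • (w - y) - b = (y - b) + t • (w - y) := by module
    rw [e, norm_add_sq_real, real_inner_smul_right, norm_smul, Real.norm_eq_abs, mul_pow, sq_abs]
    have h2 : ⟪y - b, w - y⟫ = -q := by
      rw [hqdef, ← inner_neg_left]; congr 1; module
    rw [h2]; ring
  have hkey : 2 * t * q ≤ t ^ 2 * ‖w - y‖ ^ 2 := by nlinarith [hsq, hexp]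
  have htle : t ≤ q / (‖w - y‖ ^ 2 + 1) := min_le_right _ _
  have h5 : t * ‖w - y‖ ^ 2 ≤ (q / (‖w - y‖ ^ 2 + 1)) * ‖w - y‖ ^ 2 :=
    mul_le_mul_of_nonneg_right htle (sq_nonneg _)
  have h6 : (q / (‖w - y‖ ^ 2 + 1)) * ‖w - y‖ ^ 2 ≤ q := by
    rw [div_mul_eq_mul_div, div_le_iff₀ hwy]; nlinarith [hq]
  nlinarith [mul_le_mul_of_nonneg_left (h5.trans h6) (le_of_lt ht0), hkey, mul_pos ht0 hq]

lemma ADMM_strong_min {C : Set F} (hC : Convex ℝ C) (g : F → ℝ) (σ : ℝ) (hσ : 0 < σ)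
    {m : F} (hm : m ∈ C)
    (hsc : ∀ x ∈ C, ∀ t : ℝ, 0 ≤ t → t ≤ 1 →
      g (m + t • (x - m)) ≤ (1 - t) * g m + t * g x - σ / 2 * (t * (1 - t) * ‖x - m‖ ^ 2))
    (hmin : ∀ z ∈ C, g m ≤ g z) :
    ∀ x ∈ C, g m + σ / 2 * ‖x - m‖ ^ 2 ≤ g x := by
  intro x hx
  by_contra hcon
  push_neg at hcon
  by_cases hxm : x = m
  · rw [hxm] at hcon; simp at hcon
  have hnx : 0 < ‖x - m‖ ^ 2 :=
    pow_pos (norm_pos_iff.mpr (sub_ne_zero_of_ne hxm)) 2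
  have hden : 0 < σ * ‖x - m‖ ^ 2 := by positivity
  have hδ : 0 < g m + σ / 2 * ‖x - m‖ ^ 2 - g x := by linarith
  set t : ℝ := min 1 ((g m + σ / 2 * ‖x - m‖ ^ 2 - g x) / (σ * ‖x - m‖ ^ 2)) with htdef
  have ht0 : 0 < t := lt_min one_pos (div_pos hδ hden)
  have ht1 : t ≤ 1 := min_le_left _ _
  have hz : m + t • (x - m) ∈ C := by
    have h := hC hm hx (by linarith : (0:ℝ) ≤ 1 - t) (le_of_lt ht0) (by ring)
    have e : (1 - t) • m + t • x = m + t • (x - m) := by module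
    rwa [e] at h
  have h1 := hmin _ hz
  have h2 := hsc x hx t (le_of_lt ht0) ht1
  have h3 : t * g m ≤ t * (g x - σ / 2 * ((1 - t) * ‖x - m‖ ^ 2)) := by nlinarith [h1, h2]
  have h4 : g m ≤ g x - σ / 2 * ((1 - t) * ‖x - m‖ ^ 2) := le_of_mul_le_mul_left h3 ht0
  have h5 : g m + σ / 2 * ‖x - m‖ ^ 2 - g x ≤ σ / 2 * (t * ‖x - m‖ ^ 2) := by nlinarith [h4]
  have htle : t ≤ (g m + σ / 2 * ‖x - m‖ ^ 2 - g x) / (σ * ‖x - m‖ ^ 2) := min_le_right _ _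
  have h6 : t * ‖x - m‖ ^ 2
      ≤ ((g m + σ / 2 * ‖x - m‖ ^ 2 - g x) / (σ * ‖x - m‖ ^ 2)) * ‖x - m‖ ^ 2 :=
    mul_le_mul_of_nonneg_right htle (le_of_lt hnx)
  have h7 : ((g m + σ / 2 * ‖x - m‖ ^ 2 - g x) / (σ * ‖x - m‖ ^ 2)) * ‖x - m‖ ^ 2
      = (g m + σ / 2 * ‖x - m‖ ^ 2 - g x) / σ := by
    rw [div_mul_eq_mul_div, mul_div_mul_right _ _ (ne_of_gt hnx)]
  rw [h7] at h6
  have h8 : σ / 2 * (t * ‖x - m‖ ^ 2) ≤ σ / 2 * ((g m + σ / 2 * ‖x - m‖ ^ 2 - g x) / σ) :=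
    mul_le_mul_of_nonneg_left h6 (by positivity)
  have h9 : σ / 2 * ((g m + σ / 2 * ‖x - m‖ ^ 2 - g x) / σ)
      = (g m + σ / 2 * ‖x - m‖ ^ 2 - g x) / 2 := by
    field_simp
  rw [h9] at h8
  linarith

lemma ADMM_step_ineq (μ : ℝ) (hμ : 0 < μ) (a a' c b b' : F)
    (hb' : b' = b + μ⁻¹ • (a' - c))
    (h1 : ⟪a', b⟫ ≤ 1 / (2 * μ) * (‖c‖ ^ 2 - ‖a' - c‖ ^ 2) - (1 + 1 / μ) / 2 * ‖a'‖ ^ 2)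
    (h2 : 1 / μ * (‖c‖ ^ 2 - ⟪a, c⟫) ≤ ⟪b, c⟫) :
    μ ^ 2 * ‖b'‖ ^ 2 + ‖a'‖ ^ 2 + (μ * ‖a'‖ ^ 2 + ‖a - c‖ ^ 2) ≤ μ ^ 2 * ‖b‖ ^ 2 + ‖a‖ ^ 2 := by
  have hμ0 : μ ≠ 0 := ne_of_gt hμ
  have hb2 : μ ^ 2 * ‖b'‖ ^ 2
      = μ ^ 2 * ‖b‖ ^ 2 + 2 * μ * (⟪a', b⟫ - ⟪b, c⟫) + ‖a' - c‖ ^ 2 := by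
    rw [hb', norm_add_sq_real, real_inner_smul_right, inner_sub_right, norm_smul,
      Real.norm_eq_abs, mul_pow, sq_abs, real_inner_comm b a']
    field_simp
  have hd1 : ‖a' - c‖ ^ 2 = ‖a'‖ ^ 2 - 2 * ⟪a', c⟫ + ‖c‖ ^ 2 := norm_sub_sq_real a' c
  have hd2 : ‖a - c‖ ^ 2 = ‖a‖ ^ 2 - 2 * ⟪a, c⟫ + ‖c‖ ^ 2 := norm_sub_sq_real a c
  have h2μ : (0:ℝ) ≤ 2 * μ := by positivity
  have key1 : 2 * μ * (1 / (2 * μ) * (‖c‖ ^ 2 - ‖a' - c‖ ^ 2) - (1 + 1 / μ) / 2 * ‖a'‖ ^ 2)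
      = (‖c‖ ^ 2 - ‖a' - c‖ ^ 2) - (μ + 1) * ‖a'‖ ^ 2 := by
    field_simp
  have h1' : 2 * μ * ⟪a', b⟫ ≤ (‖c‖ ^ 2 - ‖a' - c‖ ^ 2) - (μ + 1) * ‖a'‖ ^ 2 := by
    calc 2 * μ * ⟪a', b⟫
        ≤ 2 * μ * (1 / (2 * μ) * (‖c‖ ^ 2 - ‖a' - c‖ ^ 2) - (1 + 1 / μ) / 2 * ‖a'‖ ^ 2) :=
          mul_le_mul_of_nonneg_left h1 h2μ
      _ = _ := key1
  have key2 : 2 * μ * (1 / μ * (‖c‖ ^ 2 - ⟪a, c⟫)) = 2 * (‖c‖ ^ 2 - ⟪a, c⟫) := by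
    field_simp
  have h2' : 2 * (‖c‖ ^ 2 - ⟪a, c⟫) ≤ 2 * μ * ⟪b, c⟫ := by
    calc 2 * (‖c‖ ^ 2 - ⟪a, c⟫) = 2 * μ * (1 / μ * (‖c‖ ^ 2 - ⟪a, c⟫)) := key2.symm
      _ ≤ 2 * μ * ⟪b, c⟫ := mul_le_mul_of_nonneg_left h2 h2μ
  linarith [hb2, hd1, hd2, h1', h2']

/-- strong-convexity inequality for the augmented objective along segments -/
lemma ADMM_G_comb (st yv lv : F) (lam μ : ℝ) (hlam : 0 ≤ lam) (hμ : 0 < μ)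
    (n : F → ℝ)
    (hn : ∀ t : ℝ, 0 ≤ t → t ≤ 1 → ∀ x z : F, n (x + t • (z - x)) ≤ (1 - t) * n x + t * n z)
    (m x : F) (t : ℝ) (h0 : 0 ≤ t) (h1 : t ≤ 1) :
    1 / 2 * ‖m + t • (x - m) - st‖ ^ 2 + lam * n (m + t • (x - m))
        + ⟪m + t • (x - m) - yv, lv⟫ + 1 / (2 * μ) * ‖m + t • (x - m) - yv‖ ^ 2
      ≤ (1 - t) * (1 / 2 * ‖m - st‖ ^ 2 + lam * n m + ⟪m - yv, lv⟫ + 1 / (2 * μ) * ‖m - yv‖ ^ 2)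
        + t * (1 / 2 * ‖x - st‖ ^ 2 + lam * n x + ⟪x - yv, lv⟫ + 1 / (2 * μ) * ‖x - yv‖ ^ 2)
        - (1 + 1 / μ) / 2 * (t * (1 - t) * ‖x - m‖ ^ 2) := by
  have hμ0 : μ ≠ 0 := ne_of_gt hμ
  have e1 : m + t • (x - m) - st = (m - st) + t • ((x - st) - (m - st)) := by module
  have q1 : ‖m + t • (x - m) - st‖ ^ 2
      = (1 - t) * ‖m - st‖ ^ 2 + t * ‖x - st‖ ^ 2 - t * (1 - t) * ‖m - x‖ ^ 2 := by
    rw [e1, ADMM_quad_id]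
    rw [show (m - st) - (x - st) = m - x from by module]
  have e4 : m + t • (x - m) - yv = (m - yv) + t • ((x - yv) - (m - yv)) := by module
  have q4 : ‖m + t • (x - m) - yv‖ ^ 2
      = (1 - t) * ‖m - yv‖ ^ 2 + t * ‖x - yv‖ ^ 2 - t * (1 - t) * ‖m - x‖ ^ 2 := by
    rw [e4, ADMM_quad_id]
    rw [show (m - yv) - (x - yv) = m - x from by module]
  have q4' : 1 / (2 * μ) * ‖m + t • (x - m) - yv‖ ^ 2
      = 1 / (2 * μ) * ((1 - t) * ‖m - yv‖ ^ 2 + t * ‖x - yv‖ ^ 2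
          - t * (1 - t) * ‖m - x‖ ^ 2) := by rw [q4]
  have q3 : ⟪m + t • (x - m) - yv, lv⟫ = (1 - t) * ⟪m - yv, lv⟫ + t * ⟪x - yv, lv⟫ := by
    rw [e4]
    simp only [inner_add_left, inner_sub_left, real_inner_smul_left]
    ring
  have q2 : lam * n (m + t • (x - m)) ≤ lam * ((1 - t) * n m + t * n x) :=
    mul_le_mul_of_nonneg_left (hn t h0 h1 m x) hlam
  have hxm : ‖x - m‖ ^ 2 = ‖m - x‖ ^ 2 := by rw [norm_sub_rev]
  have hcoef : (1 + 1 / μ) / 2 * (t * (1 - t) * ‖m - x‖ ^ 2)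
      = 1 / 2 * (t * (1 - t) * ‖m - x‖ ^ 2) + 1 / (2 * μ) * (t * (1 - t) * ‖m - x‖ ^ 2) := by
    field_simp
  rw [hxm]
  nlinarith [q1, q2, q3, q4', hcoef]

/-- existence of minimizers of coercive quadratic-plus-continuous functions -/
lemma ADMM_exists_min [ProperSpace F] (st : F) (φ : F → ℝ) (hφc : Continuous φ)
    (hφ0 : ∀ x, 0 ≤ φ x)
    {D : Set F} (hDc : IsClosed D) {w0 : F} (hw0 : w0 ∈ D) :
    ∃ xs ∈ D, ∀ x ∈ D, 1 / 2 * ‖xs - st‖ ^ 2 + φ xs ≤ 1 / 2 * ‖x - st‖ ^ 2 + φ x := by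
  set f : F → ℝ := fun x => 1 / 2 * ‖x - st‖ ^ 2 + φ x with hf
  have hfc : Continuous f :=
    (continuous_const.mul ((continuous_id.sub continuous_const).norm.pow 2)).add hφc
  have hf0 : ∀ x, 0 ≤ f x := fun x => by
    have h1 := hφ0 x
    have h2 : (0:ℝ) ≤ 1 / 2 * ‖x - st‖ ^ 2 := by positivity
    show (0:ℝ) ≤ 1 / 2 * ‖x - st‖ ^ 2 + φ x
    linarith
  set R : ℝ := Real.sqrt (2 * f w0) with hR
  have hfw0 : 0 ≤ f w0 := hf0 w0
  have hwK : w0 ∈ D ∩ Metric.closedBall st R := by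
    refine ⟨hw0, ?_⟩
    rw [Metric.mem_closedBall, dist_eq_norm, hR]
    have h2 : ‖w0 - st‖ = Real.sqrt (‖w0 - st‖ ^ 2) := (Real.sqrt_sq (norm_nonneg _)).symm
    rw [h2]
    refine Real.sqrt_le_sqrt ?_
    have h3 := hφ0 w0
    show ‖w0 - st‖ ^ 2 ≤ 2 * (1 / 2 * ‖w0 - st‖ ^ 2 + φ w0)
    linarith
  have hK : IsCompact (D ∩ Metric.closedBall st R) :=
    (isCompact_closedBall st R).inter_left hDc
  obtain ⟨xs, hxsK, hmin⟩ := hK.exists_isMinOn ⟨w0, hwK⟩ hfc.continuousOn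
  refine ⟨xs, hxsK.1, fun x hx => ?_⟩
  by_cases hxB : x ∈ Metric.closedBall st R
  · exact hmin ⟨hx, hxB⟩
  · have h1 : R < ‖x - st‖ := by
      rw [Metric.mem_closedBall, dist_eq_norm, not_le] at hxB; exact hxB
    have hR0 : 0 ≤ R := Real.sqrt_nonneg _
    have h2 : R ^ 2 < ‖x - st‖ ^ 2 := by nlinarith
    have h3 : R ^ 2 = 2 * (1 / 2 * ‖w0 - st‖ ^ 2 + φ w0) := Real.sq_sqrt (by linarith)
    have h4 : 1 / 2 * ‖xs - st‖ ^ 2 + φ xs ≤ 1 / 2 * ‖w0 - st‖ ^ 2 + φ w0 := hmin hwK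
    have h5 := hφ0 x
    linarith [h2, h3, h4]

/-- existence of a subgradient aligned with the constraint set, via Hahn-Banach -/
lemma ADMM_exists_subgrad [CompleteSpace F] {f : F → ℝ} (hfc : Continuous f)
    (hfconv : ∀ x y : F, ∀ a b : ℝ, 0 ≤ a → 0 ≤ b → a + b = 1 →
      f (a • x + b • y) ≤ a * f x + b * f y)
    {D : Set F} (hD : Convex ℝ D) {xs : F} (hxs : xs ∈ D)
    (hmin : ∀ x ∈ D, f xs ≤ f x) :
    ∃ g : F, (∀ x, f xs + ⟪g, x - xs⟫ ≤ f x) ∧ (∀ w ∈ D, 0 ≤ ⟪g, w - xs⟫) := by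
  classical
  set A : Set (F × ℝ) := {q | f q.1 - q.2 < f xs} with hAdef
  have hAopen : IsOpen A :=
    isOpen_lt ((hfc.comp continuous_fst).sub continuous_snd) continuous_const
  have hAconv : Convex ℝ A := by
    intro q hq r hr a b ha hb hab
    simp only [hAdef, Set.mem_setOf_eq] at hq hr ⊢
    have hfst : (a • q + b • r).1 = a • q.1 + b • r.1 := by simp
    have hsnd : (a • q + b • r).2 = a * q.2 + b * r.2 := by simp [smul_eq_mul]
    rw [hfst, hsnd]
    have h := hfconv q.1 r.1 a b ha hb hab
    have h3 : a * f xs + b * f xs = f xs := by rw [← add_mul, hab, one_mul]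
    rcases eq_or_lt_of_le ha with h0 | hapos
    · have hb1 : b = 1 := by linarith
      rw [← h0, hb1] at h ⊢
      simp only [zero_smul, one_smul, zero_add, zero_mul, one_mul] at h ⊢
      linarith
    · have h1 : a * (f q.1 - q.2) < a * f xs := mul_lt_mul_of_pos_left hq hapos
      have h2 : b * (f r.1 - r.2) ≤ b * f xs := mul_le_mul_of_nonneg_left (le_of_lt hr) hb
      nlinarith [h, h1, h2, h3]
  set B : Set (F × ℝ) := D ×ˢ Set.Iic (0:ℝ) with hBdef
  have hBconv : Convex ℝ B := hD.prod (convex_Iic 0)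
  have hdisj : Disjoint A B := by
    rw [Set.disjoint_left]
    rintro ⟨x, r⟩ hqA ⟨hq1, hq2⟩
    simp only [hAdef, Set.mem_setOf_eq] at hqA
    simp only [Set.mem_Iic] at hq2
    have := hmin x hq1
    linarith
  obtain ⟨L, c, hLA, hLB⟩ := geometric_hahn_banach_open hAconv hAopen hBconv hdisj
  set ℓ : F →L[ℝ] ℝ := L.comp (ContinuousLinearMap.inl ℝ F ℝ) with hℓdef
  set s : ℝ := L (0, 1) with hsdef
  have hdecomp : ∀ (x : F) (r : ℝ), L (x, r) = ℓ x + r * s := by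
    intro x r
    have e : (x, r) = (x, (0:ℝ)) + r • ((0:F), (1:ℝ)) := by
      simp [Prod.ext_iff, smul_eq_mul]
    rw [e, map_add, _root_.map_smul, smul_eq_mul]
    rfl
  have hs : s < 0 := by
    have h1 := hLA (xs, 1) (by simp [hAdef])
    have h2 := hLB (xs, 0) ⟨hxs, by simp⟩
    rw [hdecomp] at h1 h2
    linarith
  have key2 : ∀ x, ℓ x + (f x - f xs) * s ≤ c := by
    intro x
    by_contra h
    push_neg at h
    set ε : ℝ := (ℓ x + (f x - f xs) * s - c) / (-s) with hεdef
    have hε : 0 < ε := div_pos (by linarith) (by linarith)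
    have hmem : (x, f x - f xs + ε) ∈ A := by
      simp only [hAdef, Set.mem_setOf_eq]
      linarith
    have h2 := hLA _ hmem
    rw [hdecomp] at h2
    have h3 : ε * (-s) = ℓ x + (f x - f xs) * s - c := by
      rw [hεdef, div_mul_cancel₀]
      linarith
    nlinarith [h2, h3]
  have hcl : c = ℓ xs := by
    have h1 := key2 xs
    have h2 := hLB (xs, 0) ⟨hxs, by simp⟩
    rw [hdecomp] at h2
    simp only [sub_self, zero_mul, add_zero] at h1 h2
    linarith
  refine ⟨(-s)⁻¹ • ((InnerProductSpace.toDual ℝ F).symm ℓ), ?_, ?_⟩ <;>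
    [intro x; intro w hw]
  · have hg : ⟪(-s)⁻¹ • ((InnerProductSpace.toDual ℝ F).symm ℓ), x - xs⟫
        = (-s)⁻¹ * (ℓ x - ℓ xs) := by
      rw [real_inner_smul_left, InnerProductSpace.toDual_symm_apply]
      rw [map_sub]
    rw [hg]
    have h1 := key2 x
    rw [hcl] at h1
    have h2 : ℓ x - ℓ xs ≤ (f x - f xs) * (-s) := by linarith
    have hs' : 0 < -s := by linarith
    have h3 : (-s)⁻¹ * (ℓ x - ℓ xs) ≤ (-s)⁻¹ * ((f x - f xs) * (-s)) :=
      mul_le_mul_of_nonneg_left h2 (le_of_lt (inv_pos.mpr hs'))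
    have h4 : (-s)⁻¹ * ((f x - f xs) * (-s)) = f x - f xs := by
      field_simp
      exact mul_div_cancel_left₀ _ (ne_of_lt hs)
    linarith
  · have hg : ⟪(-s)⁻¹ • ((InnerProductSpace.toDual ℝ F).symm ℓ), w - xs⟫
        = (-s)⁻¹ * (ℓ w - ℓ xs) := by
      rw [real_inner_smul_left, InnerProductSpace.toDual_symm_apply]
      rw [map_sub]
    rw [hg]
    have h1 := hLB (w, 0) ⟨hw, by simp⟩
    rw [hdecomp] at h1
    simp only [zero_mul, add_zero] at h1
    have hs' : 0 < -s := by linarith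
    rw [hcl] at h1
    exact mul_nonneg (le_of_lt (inv_pos.mpr hs')) (by linarith)

lemma ADMM_descent_tendsto (W e : ℕ → ℝ) (hW0 : ∀ k, 0 ≤ W k) (he0 : ∀ k, 0 ≤ e k)
    (hdec : ∀ k, W (k + 1) + e k ≤ W k) : Tendsto e atTop (nhds 0) := by
  have hanti : Antitone W := antitone_nat_of_succ_le (fun k => by linarith [hdec k, he0 k])
  have hbdd : BddBelow (Set.range W) := ⟨0, by rintro _ ⟨k, rfl⟩; exact hW0 k⟩
  have h1 : Tendsto W atTop (nhds (⨅ k, W k)) := tendsto_atTop_ciInf hanti hbdd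
  have h2 : Tendsto (fun k => W (k + 1)) atTop (nhds (⨅ k, W k)) :=
    h1.comp (tendsto_add_atTop_nat 1)
  have h3 : Tendsto (fun k => W k - W (k + 1)) atTop (nhds 0) := by
    have := h1.sub h2
    simpa using this
  exact squeeze_zero he0 (fun k => by linarith [hdec k]) h3

lemma ADMM_tendsto_norm_of_sq {G : Type*} [NormedAddCommGroup G] {a : ℕ → G}
    (h : Tendsto (fun k => ‖a k‖ ^ 2) atTop (nhds 0)) :
    Tendsto (fun k => ‖a k‖) atTop (nhds 0) := by
  have h1 : Tendsto (fun k => Real.sqrt (‖a k‖ ^ 2)) atTop (nhds (Real.sqrt 0)) :=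
    (Real.continuous_sqrt.tendsto 0).comp h
  have h2 : (fun k => Real.sqrt (‖a k‖ ^ 2)) = fun k => ‖a k‖ :=
    funext fun k => Real.sqrt_sq (norm_nonneg _)
  rw [h2] at h1
  simpa using h1

end AuxVec

/-! ### Encoding matrices as Euclidean vectors -/

section Enc

variable {p : ℕ}

noncomputable def admmEnc {p : ℕ} (A : Matrix (Fin p) (Fin p) ℝ) :
    EuclideanSpace ℝ (Fin p × Fin p) :=
  (WithLp.equiv 2 _).symm (fun ij => A ij.1 ij.2)

noncomputable def admmDec {p : ℕ} (x : EuclideanSpace ℝ (Fin p × Fin p)) :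
    Matrix (Fin p) (Fin p) ℝ :=
  Matrix.of (fun i j => x (i, j))

@[simp] lemma admmEnc_apply (A : Matrix (Fin p) (Fin p) ℝ) (ij : Fin p × Fin p) :
    admmEnc A ij = A ij.1 ij.2 := rfl

@[simp] lemma admmDec_apply (x : EuclideanSpace ℝ (Fin p × Fin p)) (i j : Fin p) :
    admmDec x i j = x (i, j) := rfl

@[simp] lemma admmDec_enc (A : Matrix (Fin p) (Fin p) ℝ) : admmDec (admmEnc A) = A := rfl

@[simp] lemma admmEnc_dec (x : EuclideanSpace ℝ (Fin p × Fin p)) : admmEnc (admmDec x) = x := rfl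

lemma admmEnc_sub (A B : Matrix (Fin p) (Fin p) ℝ) :
    admmEnc (A - B) = admmEnc A - admmEnc B := rfl

lemma admmEnc_add (A B : Matrix (Fin p) (Fin p) ℝ) :
    admmEnc (A + B) = admmEnc A + admmEnc B := rfl

lemma admmEnc_smul (r : ℝ) (A : Matrix (Fin p) (Fin p) ℝ) :
    admmEnc (r • A) = r • admmEnc A := rfl

lemma frob_enc (A : Matrix (Fin p) (Fin p) ℝ) : frobNorm A = ‖admmEnc A‖ := by
  rw [EuclideanSpace.norm_eq, frobNorm]
  congr 1
  rw [Fintype.sum_prod_type]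
  simp [Real.norm_eq_abs, sq_abs]

lemma inner_enc (A B : Matrix (Fin p) (Fin p) ℝ) :
    ⟪admmEnc A, admmEnc B⟫ = trInner A B := by
  rw [trInner, Matrix.trace]
  simp only [PiLp.inner_apply, RCLike.inner_apply, conj_trivial, admmEnc_apply,
    Matrix.diag_apply, Matrix.mul_apply, Matrix.transpose_apply]
  rw [Fintype.sum_prod_type]
  rw [Finset.sum_comm]
  exact Finset.sum_congr rfl fun _ _ => Finset.sum_congr rfl fun _ _ => mul_comm _ _

/-- the off-diagonal l1 norm as a function on Euclidean space -/
noncomputable def admmN1 {p : ℕ} (x : EuclideanSpace ℝ (Fin p × Fin p)) : ℝ :=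
  ∑ ij : Fin p × Fin p, if ij.1 ≠ ij.2 then |x ij| else 0

lemma off_n1 (A : Matrix (Fin p) (Fin p) ℝ) : offL1 A = admmN1 (admmEnc A) := by
  rw [offL1, admmN1, Fintype.sum_prod_type]
  simp

lemma ADMM_contCoord (ij : Fin p × Fin p) :
    Continuous fun x : EuclideanSpace ℝ (Fin p × Fin p) => x ij :=
  (continuous_apply ij).comp (PiLp.continuousLinearEquiv 2 ℝ _).continuous

lemma ADMM_coord_comb (a b : ℝ) (x y : EuclideanSpace ℝ (Fin p × Fin p)) (ij : Fin p × Fin p) :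
    (a • x + b • y) ij = a * x ij + b * y ij := by
  simp [PiLp.add_apply, PiLp.smul_apply, smul_eq_mul]

lemma ADMM_dec_comb (a b : ℝ) (x y : EuclideanSpace ℝ (Fin p × Fin p)) :
    admmDec (a • x + b • y) = a • admmDec x + b • admmDec y := by
  ext i j
  simp [admmDec, ADMM_coord_comb, Matrix.add_apply, Matrix.smul_apply, smul_eq_mul]

lemma ADMM_n1_nonneg (x : EuclideanSpace ℝ (Fin p × Fin p)) : 0 ≤ admmN1 x := by
  refine Finset.sum_nonneg fun ij _ => ?_
  split <;> simp [abs_nonneg]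

lemma ADMM_n1_cont : Continuous (admmN1 (p := p)) := by
  refine continuous_finset_sum _ fun ij _ => ?_
  by_cases h : ij.1 ≠ ij.2
  · simpa [h] using (ADMM_contCoord ij).abs
  · simpa [h] using continuous_const

lemma ADMM_n1_comb (x z : EuclideanSpace ℝ (Fin p × Fin p)) (t : ℝ) (h0 : 0 ≤ t) (h1 : t ≤ 1) :
    admmN1 (x + t • (z - x)) ≤ (1 - t) * admmN1 x + t * admmN1 z := by
  rw [admmN1, admmN1, admmN1, Finset.mul_sum, Finset.mul_sum, ← Finset.sum_add_distrib]
  refine Finset.sum_le_sum fun ij _ => ?_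
  by_cases h : ij.1 ≠ ij.2
  · rw [if_pos h, if_pos h, if_pos h]
    have e : (x + t • (z - x)) ij = (1 - t) * x ij + t * z ij := by
      simp [PiLp.add_apply, PiLp.smul_apply, PiLp.sub_apply, smul_eq_mul]
      ring
    rw [e]
    calc |(1 - t) * x ij + t * z ij| ≤ |(1 - t) * x ij| + |t * z ij| := abs_add_le _ _
      _ = (1 - t) * |x ij| + t * |z ij| := by
          rw [abs_mul, abs_mul, abs_of_nonneg (by linarith : (0:ℝ) ≤ 1 - t), abs_of_nonneg h0]
  · simp [h]

end Enc

/-! ### Spectral characterization of the constraint set -/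

section Spec

variable {p : ℕ} {A : Matrix (Fin p) (Fin p) ℝ}

lemma ADMM_dot_self_nonneg (v : Fin p → ℝ) : 0 ≤ v ⬝ᵥ v :=
  Finset.sum_nonneg fun i _ => mul_self_nonneg _

lemma ADMM_herm_entry (hA : A.IsHermitian) (i j : Fin p) : A j i = A i j := by
  have h := congrFun (congrFun hA i) j
  rwa [Matrix.conjTranspose_apply, star_trivial] at h

lemma ADMM_herm_transpose (hA : A.IsHermitian) : Aᵀ = A := by
  ext i j
  rw [Matrix.transpose_apply]
  exact ADMM_herm_entry hA i j

lemma ADMM_rayleigh (hA : A.IsHermitian) (x : Fin p → ℝ) :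
    x ⬝ᵥ A *ᵥ x = ∑ i, hA.eigenvalues i * ((⇑(hA.eigenvectorBasis i)) ⬝ᵥ x) ^ 2 ∧
    x ⬝ᵥ x = ∑ i, ((⇑(hA.eigenvectorBasis i)) ⬝ᵥ x) ^ 2 := by
  classical
  set b := hA.eigenvectorBasis with hb
  set x' : EuclideanSpace ℝ (Fin p) := (WithLp.equiv 2 _).symm x with hx'
  have hdot : ∀ u v : EuclideanSpace ℝ (Fin p), ⟪u, v⟫ = (⇑u) ⬝ᵥ (⇑v) := by
    intro u v
    simp [PiLp.inner_apply, RCLike.inner_apply, conj_trivial, dotProduct, mul_comm]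
  have hrepr : ∀ (u v : EuclideanSpace ℝ (Fin p)), ⟪u, v⟫ = ∑ i, b.repr u i * b.repr v i := by
    intro u v
    calc ⟪u, v⟫ = ⟪b.repr u, b.repr v⟫ := (b.repr.inner_map_map u v).symm
      _ = ∑ i, b.repr u i * b.repr v i := by
          rw [PiLp.inner_apply]
          simp only [RCLike.inner_apply, conj_trivial]
          exact Finset.sum_congr rfl fun _ _ => mul_comm _ _
  set y' : EuclideanSpace ℝ (Fin p) := (WithLp.equiv 2 _).symm (A *ᵥ x) with hy'
  have hbx : ∀ (u : EuclideanSpace ℝ (Fin p)) (i : Fin p), b.repr u i = (⇑(b i)) ⬝ᵥ (⇑u) := by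
    intro u i
    rw [b.repr_apply_apply, hdot]
  have hxv : ∀ i, b.repr x' i = (⇑(b i)) ⬝ᵥ x := by
    intro i
    rw [hbx x' i]
    rfl
  have hyrepr : ∀ i, b.repr y' i = hA.eigenvalues i * b.repr x' i := by
    intro i
    rw [hbx y' i, hxv i]
    show (⇑(b i)) ⬝ᵥ (A *ᵥ x) = hA.eigenvalues i * ((⇑(b i)) ⬝ᵥ x)
    rw [Matrix.dotProduct_mulVec]
    have ht : (⇑(b i)) ᵥ* A = A *ᵥ (⇑(b i)) := by
      conv_lhs => rw [← ADMM_herm_transpose hA]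
      rw [Matrix.vecMul_transpose]
    rw [ht, hA.mulVec_eigenvectorBasis, smul_dotProduct, smul_eq_mul]
  constructor
  · have h1 : x ⬝ᵥ A *ᵥ x = ⟪x', y'⟫ := by
      rw [hdot]; rfl
    rw [h1, hrepr]
    refine Finset.sum_congr rfl fun i _ => ?_
    rw [hyrepr i, hxv i]
    ring
  · have h2 : x ⬝ᵥ x = ⟪x', x'⟫ := by
      rw [hdot]; rfl
    rw [h2, hrepr]
    refine Finset.sum_congr rfl fun i _ => ?_
    rw [hxv i]
    ring

lemma ADMM_rayleigh_upper (hp : 0 < p) (hA : A.IsHermitian) (x : Fin p → ℝ) :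
    x ⬝ᵥ A *ᵥ x ≤ (⨆ i, hA.eigenvalues i) * (x ⬝ᵥ x) := by
  haveI : Nonempty (Fin p) := Fin.pos_iff_nonempty.mp hp
  obtain ⟨h1, h2⟩ := ADMM_rayleigh hA x
  rw [h1, h2, Finset.mul_sum]
  refine Finset.sum_le_sum fun i _ => ?_
  exact mul_le_mul_of_nonneg_right
    (le_ciSup (Set.Finite.bddAbove (Set.finite_range _)) i) (sq_nonneg _)

lemma ADMM_rayleigh_lower (hp : 0 < p) (hA : A.IsHermitian) (x : Fin p → ℝ) :
    (⨅ i, hA.eigenvalues i) * (x ⬝ᵥ x) ≤ x ⬝ᵥ A *ᵥ x := by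
  haveI : Nonempty (Fin p) := Fin.pos_iff_nonempty.mp hp
  obtain ⟨h1, h2⟩ := ADMM_rayleigh hA x
  rw [h1, h2, Finset.mul_sum]
  refine Finset.sum_le_sum fun i _ => ?_
  exact mul_le_mul_of_nonneg_right
    (ciInf_le (Set.Finite.bddBelow (Set.finite_range _)) i) (sq_nonneg _)

lemma ADMM_eigen_dot (hA : A.IsHermitian) (i : Fin p) :
    (⇑(hA.eigenvectorBasis i)) ⬝ᵥ A *ᵥ (⇑(hA.eigenvectorBasis i)) = hA.eigenvalues i ∧
    (⇑(hA.eigenvectorBasis i)) ⬝ᵥ (⇑(hA.eigenvectorBasis i)) = 1 := by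
  have hdot : (⇑(hA.eigenvectorBasis i)) ⬝ᵥ (⇑(hA.eigenvectorBasis i)) = 1 := by
    have h := hA.eigenvectorBasis.orthonormal.1 i
    have h2 : ⟪hA.eigenvectorBasis i, hA.eigenvectorBasis i⟫
        = (⇑(hA.eigenvectorBasis i)) ⬝ᵥ (⇑(hA.eigenvectorBasis i)) := by
      simp only [PiLp.inner_apply, RCLike.inner_apply, conj_trivial, dotProduct]
    rw [← h2, real_inner_self_eq_norm_sq, h]
    norm_num
  constructor
  · rw [hA.mulVec_eigenvectorBasis, dotProduct_smul, smul_eq_mul, hdot, mul_one]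
  · exact hdot

/-- characterization of Dset by linear inequalities, for `p > 0` -/
lemma ADMM_mem_Dset_iff {κ : ℝ} (hp : 0 < p) (hκ : 1 ≤ κ) (A : Matrix (Fin p) (Fin p) ℝ) :
    A ∈ Dset κ p ↔ (A.IsHermitian ∧ (∀ v, 0 ≤ v ⬝ᵥ A *ᵥ v) ∧
      ∀ v w, (w ⬝ᵥ w) * (v ⬝ᵥ A *ᵥ v) ≤ κ * ((w ⬝ᵥ A *ᵥ w) * (v ⬝ᵥ v))) := by
  haveI : Nonempty (Fin p) := Fin.pos_iff_nonempty.mp hp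
  have hκ0 : (0:ℝ) ≤ κ := le_trans zero_le_one hκ
  constructor
  · rintro ⟨hpsd, hle⟩
    refine ⟨hpsd.1, fun v => by simpa using hpsd.dotProduct_mulVec_nonneg v, fun v w => ?_⟩
    have hS := ADMM_rayleigh_upper hp hpsd.1 v
    have hI := ADMM_rayleigh_lower hp hpsd.1 w
    have hI0 : 0 ≤ ⨅ i, hpsd.1.eigenvalues i :=
      le_ciInf fun i => hpsd.eigenvalues_nonneg i
    have hvv := ADMM_dot_self_nonneg v
    have hww := ADMM_dot_self_nonneg w
    nlinarith [mul_le_mul_of_nonneg_left hS hww,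
      mul_le_mul_of_nonneg_left (mul_le_mul_of_nonneg_right hle hvv) hww,
      mul_le_mul_of_nonneg_right (mul_le_mul_of_nonneg_left hI hκ0) hvv]
  · rintro ⟨herm, hnn, hvw⟩
    have hpsd : A.PosSemidef := Matrix.PosSemidef.of_dotProduct_mulVec_nonneg herm (fun v => by simpa using hnn v)
    refine ⟨hpsd, ?_⟩
    obtain ⟨imax, hmax⟩ := Finite.exists_max hpsd.1.eigenvalues
    obtain ⟨imin, hmin⟩ := Finite.exists_min hpsd.1.eigenvalues
    have h1 : (⨆ i, hpsd.1.eigenvalues i) = hpsd.1.eigenvalues imax :=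
      le_antisymm (ciSup_le hmax) (le_ciSup (Set.Finite.bddAbove (Set.finite_range _)) imax)
    have h2 : (⨅ i, hpsd.1.eigenvalues i) = hpsd.1.eigenvalues imin :=
      le_antisymm (ciInf_le (Set.Finite.bddBelow (Set.finite_range _)) imin)
        (le_ciInf hmin)
    rw [h1, h2]
    have key := hvw (⇑(hpsd.1.eigenvectorBasis imax)) (⇑(hpsd.1.eigenvectorBasis imin))
    rw [(ADMM_eigen_dot hpsd.1 imax).1, (ADMM_eigen_dot hpsd.1 imax).2,
      (ADMM_eigen_dot hpsd.1 imin).1, (ADMM_eigen_dot hpsd.1 imin).2] at key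
    linarith [key]

lemma ADMM_herm_iff (x : EuclideanSpace ℝ (Fin p × Fin p)) :
    (admmDec x).IsHermitian ↔ ∀ i j : Fin p, x (j, i) = x (i, j) := by
  constructor
  · intro h i j
    exact ADMM_herm_entry h i j
  · intro h
    ext i j
    rw [Matrix.conjTranspose_apply, star_trivial]
    exact h i j

lemma ADMM_Sym_convex :
    Convex ℝ {x : EuclideanSpace ℝ (Fin p × Fin p) | (admmDec x).IsHermitian} := by
  intro x hx y hy a b ha hb hab
  simp only [Set.mem_setOf_eq, ADMM_herm_iff] at hx hy ⊢
  intro i j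
  rw [ADMM_coord_comb, ADMM_coord_comb, hx i j, hy i j]

lemma ADMM_qf_cont (v : Fin p → ℝ) :
    Continuous fun x : EuclideanSpace ℝ (Fin p × Fin p) => v ⬝ᵥ (admmDec x) *ᵥ v := by
  have e : (fun x : EuclideanSpace ℝ (Fin p × Fin p) => v ⬝ᵥ (admmDec x) *ᵥ v)
      = fun x => ∑ i, v i * ∑ j, x (i, j) * v j := by
    funext x
    rfl
  rw [e]
  refine continuous_finset_sum _ fun i _ => ?_
  exact continuous_const.mul
    (continuous_finset_sum _ fun j _ => (ADMM_contCoord (i, j)).mul continuous_const)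

lemma ADMM_qf_comb (a b : ℝ) (x y : EuclideanSpace ℝ (Fin p × Fin p)) (v : Fin p → ℝ) :
    v ⬝ᵥ (admmDec (a • x + b • y)) *ᵥ v
      = a * (v ⬝ᵥ (admmDec x) *ᵥ v) + b * (v ⬝ᵥ (admmDec y) *ᵥ v) := by
  rw [ADMM_dec_comb]
  rw [Matrix.add_mulVec, Matrix.smul_mulVec, Matrix.smul_mulVec,
    dotProduct_add, dotProduct_smul, dotProduct_smul,
    smul_eq_mul, smul_eq_mul]

lemma ADMM_D_convex {κ : ℝ} (hp : 0 < p) (hκ : 1 ≤ κ) :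
    Convex ℝ {x : EuclideanSpace ℝ (Fin p × Fin p) | admmDec x ∈ Dset κ p} := by
  intro x hx y hy a b ha hb hab
  simp only [Set.mem_setOf_eq, ADMM_mem_Dset_iff hp hκ] at hx hy ⊢
  obtain ⟨hx1, hx2, hx3⟩ := hx
  obtain ⟨hy1, hy2, hy3⟩ := hy
  refine ⟨?_, ?_, ?_⟩
  · rw [ADMM_herm_iff] at hx1 hy1 ⊢
    intro i j
    rw [ADMM_coord_comb, ADMM_coord_comb, hx1 i j, hy1 i j]
  · intro v
    rw [ADMM_qf_comb]
    exact add_nonneg (mul_nonneg ha (hx2 v)) (mul_nonneg hb (hy2 v))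
  · intro v w
    rw [ADMM_qf_comb, ADMM_qf_comb]
    nlinarith [mul_le_mul_of_nonneg_left (hx3 v w) ha,
      mul_le_mul_of_nonneg_left (hy3 v w) hb]

lemma ADMM_D_closed {κ : ℝ} (hp : 0 < p) (hκ : 1 ≤ κ) :
    IsClosed {x : EuclideanSpace ℝ (Fin p × Fin p) | admmDec x ∈ Dset κ p} := by
  have e : {x : EuclideanSpace ℝ (Fin p × Fin p) | admmDec x ∈ Dset κ p}
      = ((⋂ i : Fin p, ⋂ j : Fin p, {x : EuclideanSpace ℝ (Fin p × Fin p) | x (j, i) = x (i, j)})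
        ∩ (⋂ v : Fin p → ℝ, {x | 0 ≤ v ⬝ᵥ (admmDec x) *ᵥ v}))
        ∩ ⋂ v : Fin p → ℝ, ⋂ w : Fin p → ℝ,
            {x | (w ⬝ᵥ w) * (v ⬝ᵥ (admmDec x) *ᵥ v)
              ≤ κ * ((w ⬝ᵥ (admmDec x) *ᵥ w) * (v ⬝ᵥ v))} := by
    ext x
    simp only [Set.mem_setOf_eq, ADMM_mem_Dset_iff hp hκ, Set.mem_inter_iff, Set.mem_iInter,
      ADMM_herm_iff]
    tauto
  rw [e]
  refine IsClosed.inter (IsClosed.inter ?_ ?_) ?_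
  · exact isClosed_iInter fun i => isClosed_iInter fun j =>
      isClosed_eq (ADMM_contCoord _) (ADMM_contCoord _)
  · exact isClosed_iInter fun v => isClosed_le continuous_const (ADMM_qf_cont v)
  · refine isClosed_iInter fun v => isClosed_iInter fun w => isClosed_le ?_ ?_
    · exact continuous_const.mul (ADMM_qf_cont v)
    · exact continuous_const.mul ((ADMM_qf_cont w).mul continuous_const)

lemma ADMM_one_mem_D {κ : ℝ} (hp : 0 < p) (hκ : 1 ≤ κ) :
    (1 : Matrix (Fin p) (Fin p) ℝ) ∈ Dset κ p := by
  rw [ADMM_mem_Dset_iff hp hκ]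
  refine ⟨Matrix.isHermitian_one, ?_, ?_⟩
  · intro v
    rw [Matrix.one_mulVec]
    exact ADMM_dot_self_nonneg v
  · intro v w
    rw [Matrix.one_mulVec, Matrix.one_mulVec]
    nlinarith [ADMM_dot_self_nonneg v, ADMM_dot_self_nonneg w,
      mul_nonneg (ADMM_dot_self_nonneg w) (ADMM_dot_self_nonneg v), hκ]

end Spec

set_option maxHeartbeats 2000000 in
/-- Theorem 2: global convergence of the alternating direction algorithm. From any
symmetric starting point, the iterates `Σᵏ` and `Yᵏ` converge in Frobenius norm to the
unique minimizer of `½‖Σ − Σ̃‖_F² + λ‖Σ‖₁,off` over `D_κ`. -/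
theorem stmt16 (p : ℕ) (κ lam μ : ℝ) (hκ : 1 ≤ κ) (hlam : 0 ≤ lam) (hμ : 0 < μ)
    (Stilde : Matrix (Fin p) (Fin p) ℝ) (hStilde : Stilde.IsHermitian)
    (Sseq Yseq Λseq : ℕ → Matrix (Fin p) (Fin p) ℝ)
    (hS0 : (Sseq 0).IsHermitian) (hY0 : (Yseq 0).IsHermitian) (hΛ0 : (Λseq 0).IsHermitian)
    (hYstep : ∀ k : ℕ, Yseq (k + 1) ∈ Dset κ p ∧
      ∀ W ∈ Dset κ p, frobNorm (Yseq (k + 1) - (Sseq k + μ • Λseq k)) ≤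
        frobNorm (W - (Sseq k + μ • Λseq k)))
    (hSstep : ∀ k : ℕ, (Sseq (k + 1)).IsHermitian ∧
      ∀ S : Matrix (Fin p) (Fin p) ℝ, S.IsHermitian →
        (1 / 2) * (frobNorm (Sseq (k + 1) - Stilde)) ^ 2 + lam * offL1 (Sseq (k + 1)) +
            trInner (Sseq (k + 1) - Yseq (k + 1)) (Λseq k) +
            (1 / (2 * μ)) * (frobNorm (Sseq (k + 1) - Yseq (k + 1))) ^ 2 ≤
          (1 / 2) * (frobNorm (S - Stilde)) ^ 2 + lam * offL1 S +
            trInner (S - Yseq (k + 1)) (Λseq k) +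
            (1 / (2 * μ)) * (frobNorm (S - Yseq (k + 1))) ^ 2)
    (hΛstep : ∀ k : ℕ, Λseq (k + 1) = Λseq k + μ⁻¹ • (Sseq (k + 1) - Yseq (k + 1))) :
    ∃ Shat : Matrix (Fin p) (Fin p) ℝ,
      Shat ∈ Dset κ p ∧
      (∀ S ∈ Dset κ p,
        (1 / 2) * (frobNorm (Shat - Stilde)) ^ 2 + lam * offL1 Shat ≤
          (1 / 2) * (frobNorm (S - Stilde)) ^ 2 + lam * offL1 S) ∧
      (∀ S' ∈ Dset κ p,
        (∀ S ∈ Dset κ p,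
          (1 / 2) * (frobNorm (S' - Stilde)) ^ 2 + lam * offL1 S' ≤
            (1 / 2) * (frobNorm (S - Stilde)) ^ 2 + lam * offL1 S) → S' = Shat) ∧
      Tendsto (fun k => frobNorm (Sseq k - Shat)) atTop (nhds 0) ∧
      Tendsto (fun k => frobNorm (Yseq k - Shat)) atTop (nhds 0) := by
  rcases Nat.eq_zero_or_pos p with hp0 | hp
  · -- degenerate case p = 0
    subst hp0
    have hmat : ∀ A B : Matrix (Fin 0) (Fin 0) ℝ, A = B := fun A B => by
      ext i j; exact i.elim0
    have hfrob : ∀ A : Matrix (Fin 0) (Fin 0) ℝ, frobNorm A = 0 := fun A => by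
      simp [frobNorm]
    refine ⟨0, ⟨Matrix.PosSemidef.zero, ?_⟩, ?_, ?_, ?_, ?_⟩
    · simp
    · intro S hS
      rw [hmat S 0]
    · intro S' _ _
      exact hmat S' 0
    · have h : (fun k => frobNorm (Sseq k - 0)) = fun _ => (0:ℝ) := funext fun k => hfrob _
      rw [h]; exact tendsto_const_nhds
    · have h : (fun k => frobNorm (Yseq k - 0)) = fun _ => (0:ℝ) := funext fun k => hfrob _
      rw [h]; exact tendsto_const_nhds
  -- main case p > 0
  haveI : Nonempty (Fin p) := Fin.pos_iff_nonempty.mp hp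
  have hμ0 : μ ≠ 0 := ne_of_gt hμ
  set DE : Set (EuclideanSpace ℝ (Fin p × Fin p)) := {x | admmDec x ∈ Dset κ p} with hDE
  have hDconv : Convex ℝ DE := ADMM_D_convex hp hκ
  have hDclosed : IsClosed DE := ADMM_D_closed hp hκ
  have hw0 : admmEnc (1 : Matrix (Fin p) (Fin p) ℝ) ∈ DE := by
    show admmDec (admmEnc (1 : Matrix (Fin p) (Fin p) ℝ)) ∈ Dset κ p
    rw [admmDec_enc]
    exact ADMM_one_mem_D hp hκ
  obtain ⟨xs, hxsD, hxsmin0⟩ := ADMM_exists_min (admmEnc Stilde)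
    (fun x => lam * admmN1 x) (continuous_const.mul ADMM_n1_cont)
    (fun x => mul_nonneg hlam (ADMM_n1_nonneg x)) hDclosed hw0
  have hxsmin : ∀ x ∈ DE, 1 / 2 * ‖xs - admmEnc Stilde‖ ^ 2 + lam * admmN1 xs
      ≤ 1 / 2 * ‖x - admmEnc Stilde‖ ^ 2 + lam * admmN1 x := hxsmin0
  have hxsSym : xs ∈ {x : EuclideanSpace ℝ (Fin p × Fin p) | (admmDec x).IsHermitian} := by
    have hx : admmDec xs ∈ Dset κ p := hxsD
    obtain ⟨hpsd, -⟩ := hx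
    exact hpsd.1
  -- segment inequality for the objective f
  have hfcomb : ∀ (x z : EuclideanSpace ℝ (Fin p × Fin p)) (t : ℝ), 0 ≤ t → t ≤ 1 →
      1 / 2 * ‖x + t • (z - x) - admmEnc Stilde‖ ^ 2 + lam * admmN1 (x + t • (z - x))
        ≤ (1 - t) * (1 / 2 * ‖x - admmEnc Stilde‖ ^ 2 + lam * admmN1 x)
          + t * (1 / 2 * ‖z - admmEnc Stilde‖ ^ 2 + lam * admmN1 z)
          - 1 / 2 * (t * (1 - t) * ‖x - z‖ ^ 2) := by
    intro x z t h0 h1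
    have q1 : ‖x + t • (z - x) - admmEnc Stilde‖ ^ 2
        = (1 - t) * ‖x - admmEnc Stilde‖ ^ 2 + t * ‖z - admmEnc Stilde‖ ^ 2
          - t * (1 - t) * ‖x - z‖ ^ 2 := by
      rw [show x + t • (z - x) - admmEnc Stilde
          = (x - admmEnc Stilde) + t • ((z - admmEnc Stilde) - (x - admmEnc Stilde))
          from by module, ADMM_quad_id]
      rw [show (x - admmEnc Stilde) - (z - admmEnc Stilde) = x - z from by module]
    have q2 := mul_le_mul_of_nonneg_left (ADMM_n1_comb x z t h0 h1) hlam
    nlinarith [q1, q2]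
  have hfconv : ∀ x y : EuclideanSpace ℝ (Fin p × Fin p), ∀ a b0 : ℝ,
      0 ≤ a → 0 ≤ b0 → a + b0 = 1 →
      1 / 2 * ‖(a • x + b0 • y) - admmEnc Stilde‖ ^ 2 + lam * admmN1 (a • x + b0 • y)
        ≤ a * (1 / 2 * ‖x - admmEnc Stilde‖ ^ 2 + lam * admmN1 x)
          + b0 * (1 / 2 * ‖y - admmEnc Stilde‖ ^ 2 + lam * admmN1 y) := by
    intro x y a b0 ha hb hab
    have e : a • x + b0 • y = x + b0 • (y - x) := by
      rw [show a = 1 - b0 from by linarith]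
      module
    rw [e]
    have h := hfcomb x y b0 hb (by linarith)
    have ha' : a = 1 - b0 := by linarith
    rw [ha']
    have hnn : 0 ≤ b0 * (1 - b0) * ‖x - y‖ ^ 2 :=
      mul_nonneg (mul_nonneg hb (by linarith : (0:ℝ) ≤ 1 - b0)) (sq_nonneg _)
    linarith [h, hnn]
  obtain ⟨g, hg1, hg2⟩ := ADMM_exists_subgrad
    (f := fun w => 1 / 2 * ‖w - admmEnc Stilde‖ ^ 2 + lam * admmN1 w)
    ((continuous_const.mul ((continuous_id.sub continuous_const).norm.pow 2)).add
      (continuous_const.mul ADMM_n1_cont)) hfconv hDconv hxsD hxsmin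
  -- membership of iterates
  have hyD : ∀ k, admmEnc (Yseq (k + 1)) ∈ DE := fun k => by
    show admmDec (admmEnc (Yseq (k + 1))) ∈ Dset κ p
    rw [admmDec_enc]
    exact (hYstep k).1
  have hyproj : ∀ k, ∀ w ∈ DE,
      ‖admmEnc (Yseq (k + 1)) - (admmEnc (Sseq k) + μ • admmEnc (Λseq k))‖
        ≤ ‖w - (admmEnc (Sseq k) + μ • admmEnc (Λseq k))‖ := by
    intro k w hw
    have h := (hYstep k).2 (admmDec w) hw
    rw [frob_enc, frob_enc, admmEnc_sub, admmEnc_sub, admmEnc_add, admmEnc_smul,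
      admmEnc_dec] at h
    exact h
  -- translation of the prox objective
  have trG : ∀ (k : ℕ) (M : Matrix (Fin p) (Fin p) ℝ),
      (1 / 2) * (frobNorm (M - Stilde)) ^ 2 + lam * offL1 M
        + trInner (M - Yseq (k + 1)) (Λseq k)
        + (1 / (2 * μ)) * (frobNorm (M - Yseq (k + 1))) ^ 2
      = 1 / 2 * ‖admmEnc M - admmEnc Stilde‖ ^ 2 + lam * admmN1 (admmEnc M)
        + ⟪admmEnc M - admmEnc (Yseq (k + 1)), admmEnc (Λseq k)⟫
        + 1 / (2 * μ) * ‖admmEnc M - admmEnc (Yseq (k + 1))‖ ^ 2 := by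
    intro k M
    rw [frob_enc, frob_enc, off_n1, ← inner_enc, admmEnc_sub, admmEnc_sub]
  -- the key inequality (★1)
  have hstar1 : ∀ k : ℕ,
      ⟪admmEnc (Sseq (k + 1)) - xs, admmEnc (Λseq k) + g⟫
        ≤ 1 / (2 * μ) * (‖admmEnc (Yseq (k + 1)) - xs‖ ^ 2
            - ‖(admmEnc (Sseq (k + 1)) - xs) - (admmEnc (Yseq (k + 1)) - xs)‖ ^ 2)
          - (1 + 1 / μ) / 2 * ‖admmEnc (Sseq (k + 1)) - xs‖ ^ 2 := by
    intro k
    have hmSym : admmEnc (Sseq (k + 1))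
        ∈ {x : EuclideanSpace ℝ (Fin p × Fin p) | (admmDec x).IsHermitian} := by
      show (admmDec (admmEnc (Sseq (k + 1)))).IsHermitian
      rw [admmDec_enc]
      exact (hSstep k).1
    set G : EuclideanSpace ℝ (Fin p × Fin p) → ℝ := fun w =>
      1 / 2 * ‖w - admmEnc Stilde‖ ^ 2 + lam * admmN1 w
        + ⟪w - admmEnc (Yseq (k + 1)), admmEnc (Λseq k)⟫
        + 1 / (2 * μ) * ‖w - admmEnc (Yseq (k + 1))‖ ^ 2 with hGdef
    have hminG : ∀ z ∈ {x : EuclideanSpace ℝ (Fin p × Fin p) | (admmDec x).IsHermitian},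
        G (admmEnc (Sseq (k + 1))) ≤ G z := by
      intro z hz
      have h := (hSstep k).2 (admmDec z) hz
      rw [trG k (Sseq (k + 1)), trG k (admmDec z)] at h
      simp only [admmEnc_dec] at h
      exact h
    have hsc : ∀ x ∈ {x : EuclideanSpace ℝ (Fin p × Fin p) | (admmDec x).IsHermitian},
        ∀ t : ℝ, 0 ≤ t → t ≤ 1 →
        G (admmEnc (Sseq (k + 1)) + t • (x - admmEnc (Sseq (k + 1))))
          ≤ (1 - t) * G (admmEnc (Sseq (k + 1))) + t * G x
            - (1 + 1 / μ) / 2 * (t * (1 - t) * ‖x - admmEnc (Sseq (k + 1))‖ ^ 2) := by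
      intro x _ t h0 h1
      exact ADMM_G_comb (admmEnc Stilde) (admmEnc (Yseq (k + 1))) (admmEnc (Λseq k)) lam μ
        hlam hμ admmN1 (fun t h0 h1 x z => ADMM_n1_comb x z t h0 h1)
        (admmEnc (Sseq (k + 1))) x t h0 h1
    have key := ADMM_strong_min ADMM_Sym_convex G (1 + 1 / μ) (by positivity) hmSym hsc hminG
      xs hxsSym
    have hsub : 1 / 2 * ‖xs - admmEnc Stilde‖ ^ 2 + lam * admmN1 xs
        + ⟪g, admmEnc (Sseq (k + 1)) - xs⟫
        ≤ 1 / 2 * ‖admmEnc (Sseq (k + 1)) - admmEnc Stilde‖ ^ 2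
          + lam * admmN1 (admmEnc (Sseq (k + 1))) := hg1 (admmEnc (Sseq (k + 1)))
    simp only [hGdef] at key
    rw [norm_sub_rev xs (admmEnc (Sseq (k + 1)))] at key
    have e1 : ⟪admmEnc (Sseq (k + 1)) - xs, admmEnc (Λseq k) + g⟫
        = (⟪admmEnc (Sseq (k + 1)) - admmEnc (Yseq (k + 1)), admmEnc (Λseq k)⟫
            - ⟪xs - admmEnc (Yseq (k + 1)), admmEnc (Λseq k)⟫)
          + ⟪g, admmEnc (Sseq (k + 1)) - xs⟫ := by
      simp only [inner_add_right, inner_sub_left, inner_sub_right]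
      rw [real_inner_comm g (admmEnc (Sseq (k + 1))), real_inner_comm g xs]
      ring
    rw [e1]
    rw [show (admmEnc (Sseq (k + 1)) - xs) - (admmEnc (Yseq (k + 1)) - xs)
        = admmEnc (Sseq (k + 1)) - admmEnc (Yseq (k + 1)) from by module]
    rw [show admmEnc (Yseq (k + 1)) - xs = -(xs - admmEnc (Yseq (k + 1))) from by module,
      norm_neg]
    linarith [key, hsub]
  -- the key inequality (★2)
  have hstar2 : ∀ k : ℕ,
      1 / μ * (‖admmEnc (Yseq (k + 1)) - xs‖ ^ 2
          - ⟪admmEnc (Sseq k) - xs, admmEnc (Yseq (k + 1)) - xs⟫)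
        ≤ ⟪admmEnc (Λseq k) + g, admmEnc (Yseq (k + 1)) - xs⟫ := by
    intro k
    have hproj := ADMM_proj_ineq hDconv (hyD k) (hyproj k) hxsD
    have hQ1 : 0 ≤ ⟪g, admmEnc (Yseq (k + 1)) - xs⟫ := hg2 (admmEnc (Yseq (k + 1))) (hyD k)
    have eexp : ⟪(admmEnc (Sseq k) + μ • admmEnc (Λseq k)) - admmEnc (Yseq (k + 1)),
          xs - admmEnc (Yseq (k + 1))⟫
        = -(⟪admmEnc (Sseq k) - xs, admmEnc (Yseq (k + 1)) - xs⟫)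
            + ‖admmEnc (Yseq (k + 1)) - xs‖ ^ 2
            - μ * ⟪admmEnc (Λseq k) + g, admmEnc (Yseq (k + 1)) - xs⟫
            + μ * ⟪g, admmEnc (Yseq (k + 1)) - xs⟫ := by
      rw [show (admmEnc (Sseq k) + μ • admmEnc (Λseq k)) - admmEnc (Yseq (k + 1))
          = ((admmEnc (Sseq k) - xs) - (admmEnc (Yseq (k + 1)) - xs))
            + (μ • (admmEnc (Λseq k) + g) - μ • g) from by module,
        show xs - admmEnc (Yseq (k + 1)) = -(admmEnc (Yseq (k + 1)) - xs) from by module]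
      simp only [inner_add_left, inner_sub_left, inner_neg_right, real_inner_smul_left,
        ← real_inner_self_eq_norm_sq]
      ring
    rw [eexp] at hproj
    have h2 : ‖admmEnc (Yseq (k + 1)) - xs‖ ^ 2
        - ⟪admmEnc (Sseq k) - xs, admmEnc (Yseq (k + 1)) - xs⟫
        ≤ μ * ⟪admmEnc (Λseq k) + g, admmEnc (Yseq (k + 1)) - xs⟫ := by
      linarith [hproj, mul_nonneg (le_of_lt hμ) hQ1]
    have h3 := mul_le_mul_of_nonneg_left h2 (by positivity : (0:ℝ) ≤ 1 / μ)
    have h4 : 1 / μ * (μ * ⟪admmEnc (Λseq k) + g, admmEnc (Yseq (k + 1)) - xs⟫)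
        = ⟪admmEnc (Λseq k) + g, admmEnc (Yseq (k + 1)) - xs⟫ := by
      field_simp
    linarith [h3, h4]
  -- dual update in E-coordinates
  have hbupd : ∀ k : ℕ, admmEnc (Λseq (k + 1)) + g
      = (admmEnc (Λseq k) + g)
        + μ⁻¹ • ((admmEnc (Sseq (k + 1)) - xs) - (admmEnc (Yseq (k + 1)) - xs)) := by
    intro k
    have h := congrArg admmEnc (hΛstep k)
    rw [admmEnc_add, admmEnc_smul, admmEnc_sub] at h
    rw [h]
    module
  -- Lyapunov descent
  have hWstep : ∀ k : ℕ,
      (μ ^ 2 * ‖admmEnc (Λseq (k + 1)) + g‖ ^ 2 + ‖admmEnc (Sseq (k + 1)) - xs‖ ^ 2)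
        + (μ * ‖admmEnc (Sseq (k + 1)) - xs‖ ^ 2
          + ‖(admmEnc (Sseq k) - xs) - (admmEnc (Yseq (k + 1)) - xs)‖ ^ 2)
      ≤ μ ^ 2 * ‖admmEnc (Λseq k) + g‖ ^ 2 + ‖admmEnc (Sseq k) - xs‖ ^ 2 := by
    intro k
    have h := ADMM_step_ineq μ hμ (admmEnc (Sseq k) - xs) (admmEnc (Sseq (k + 1)) - xs)
      (admmEnc (Yseq (k + 1)) - xs) (admmEnc (Λseq k) + g) (admmEnc (Λseq (k + 1)) + g)
      (hbupd k) (hstar1 k) (hstar2 k)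
    linarith [h]
  have hee : Tendsto (fun k => μ * ‖admmEnc (Sseq (k + 1)) - xs‖ ^ 2
      + ‖(admmEnc (Sseq k) - xs) - (admmEnc (Yseq (k + 1)) - xs)‖ ^ 2) atTop (nhds 0) := by
    refine ADMM_descent_tendsto
      (fun k => μ ^ 2 * ‖admmEnc (Λseq k) + g‖ ^ 2 + ‖admmEnc (Sseq k) - xs‖ ^ 2)
      _ (fun k => by positivity) (fun k => by positivity) hWstep
  have hsq1 : Tendsto (fun k => ‖admmEnc (Sseq (k + 1)) - xs‖ ^ 2) atTop (nhds 0) := by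
    have h1 := hee.const_mul μ⁻¹
    rw [mul_zero] at h1
    refine squeeze_zero (fun k => sq_nonneg _) (fun k => ?_) h1
    have hid : μ⁻¹ * (μ * ‖admmEnc (Sseq (k + 1)) - xs‖ ^ 2
        + ‖(admmEnc (Sseq k) - xs) - (admmEnc (Yseq (k + 1)) - xs)‖ ^ 2)
        = ‖admmEnc (Sseq (k + 1)) - xs‖ ^ 2
          + μ⁻¹ * ‖(admmEnc (Sseq k) - xs) - (admmEnc (Yseq (k + 1)) - xs)‖ ^ 2 := by
      field_simp
    rw [hid]
    have := mul_nonneg (inv_nonneg.mpr (le_of_lt hμ))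
      (sq_nonneg ‖(admmEnc (Sseq k) - xs) - (admmEnc (Yseq (k + 1)) - xs)‖)
    linarith
  have hsq2 : Tendsto
      (fun k => ‖(admmEnc (Sseq k) - xs) - (admmEnc (Yseq (k + 1)) - xs)‖ ^ 2)
      atTop (nhds 0) := by
    refine squeeze_zero (fun k => sq_nonneg _) (fun k => ?_) hee
    have := mul_nonneg (le_of_lt hμ) (sq_nonneg ‖admmEnc (Sseq (k + 1)) - xs‖)
    linarith
  have hna' : Tendsto (fun k => ‖admmEnc (Sseq (k + 1)) - xs‖) atTop (nhds 0) :=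
    ADMM_tendsto_norm_of_sq (a := fun k => admmEnc (Sseq (k + 1)) - xs) hsq1
  have hna : Tendsto (fun k => ‖admmEnc (Sseq k) - xs‖) atTop (nhds 0) :=
    (tendsto_add_atTop_iff_nat (f := fun k => ‖admmEnc (Sseq k) - xs‖) 1).mp hna'
  have hnd : Tendsto
      (fun k => ‖(admmEnc (Sseq k) - xs) - (admmEnc (Yseq (k + 1)) - xs)‖) atTop (nhds 0) :=
    ADMM_tendsto_norm_of_sq
      (a := fun k => (admmEnc (Sseq k) - xs) - (admmEnc (Yseq (k + 1)) - xs)) hsq2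
  have hnc : Tendsto (fun k => ‖admmEnc (Yseq (k + 1)) - xs‖) atTop (nhds 0) := by
    have hsum := hna.add hnd
    rw [add_zero] at hsum
    refine squeeze_zero (fun k => norm_nonneg _) (fun k => ?_) hsum
    have e : admmEnc (Yseq (k + 1)) - xs
        = (admmEnc (Sseq k) - xs)
          - ((admmEnc (Sseq k) - xs) - (admmEnc (Yseq (k + 1)) - xs)) := by
      abel
    conv_lhs => rw [e]
    exact norm_sub_le (admmEnc (Sseq k) - xs)
      ((admmEnc (Sseq k) - xs) - (admmEnc (Yseq (k + 1)) - xs))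
  -- conclusion
  refine ⟨admmDec xs, hxsD, ?_, ?_, ?_, ?_⟩
  · intro S hS
    have hSD : admmEnc S ∈ DE := by
      show admmDec (admmEnc S) ∈ Dset κ p
      rw [admmDec_enc]
      exact hS
    have h : 1 / 2 * ‖xs - admmEnc Stilde‖ ^ 2 + lam * admmN1 xs
        ≤ 1 / 2 * ‖admmEnc S - admmEnc Stilde‖ ^ 2 + lam * admmN1 (admmEnc S) :=
      hxsmin (admmEnc S) hSD
    have e1 : (1 / 2) * (frobNorm (admmDec xs - Stilde)) ^ 2 + lam * offL1 (admmDec xs)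
        = 1 / 2 * ‖xs - admmEnc Stilde‖ ^ 2 + lam * admmN1 xs := by
      rw [frob_enc, admmEnc_sub, off_n1, admmEnc_dec]
    have e2 : (1 / 2) * (frobNorm (S - Stilde)) ^ 2 + lam * offL1 S
        = 1 / 2 * ‖admmEnc S - admmEnc Stilde‖ ^ 2 + lam * admmN1 (admmEnc S) := by
      rw [frob_enc, admmEnc_sub, off_n1]
    rw [e1, e2]
    exact h
  · intro S' hS' hminS'
    have hSD' : admmEnc S' ∈ DE := by
      show admmDec (admmEnc S') ∈ Dset κ p
      rw [admmDec_enc]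
      exact hS'
    have hf1 : 1 / 2 * ‖xs - admmEnc Stilde‖ ^ 2 + lam * admmN1 xs
        ≤ 1 / 2 * ‖admmEnc S' - admmEnc Stilde‖ ^ 2 + lam * admmN1 (admmEnc S') :=
      hxsmin _ hSD'
    have hf2 : 1 / 2 * ‖admmEnc S' - admmEnc Stilde‖ ^ 2 + lam * admmN1 (admmEnc S')
        ≤ 1 / 2 * ‖xs - admmEnc Stilde‖ ^ 2 + lam * admmN1 xs := by
      have h := hminS' (admmDec xs) hxsD
      rw [frob_enc, frob_enc, admmEnc_sub, admmEnc_sub, off_n1, off_n1, admmEnc_dec] at h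
      exact h
    have hmid : xs + (1 / 2 : ℝ) • (admmEnc S' - xs) ∈ DE := by
      have h := hDconv hxsD hSD' (by norm_num : (0:ℝ) ≤ 1 / 2)
        (by norm_num : (0:ℝ) ≤ 1 / 2) (by norm_num)
      have e : (1 / 2 : ℝ) • xs + (1 / 2 : ℝ) • admmEnc S'
          = xs + (1 / 2 : ℝ) • (admmEnc S' - xs) := by
        module
      rwa [e] at h
    have hfm : 1 / 2 * ‖xs - admmEnc Stilde‖ ^ 2 + lam * admmN1 xs
        ≤ 1 / 2 * ‖(xs + (1 / 2 : ℝ) • (admmEnc S' - xs)) - admmEnc Stilde‖ ^ 2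
          + lam * admmN1 (xs + (1 / 2 : ℝ) • (admmEnc S' - xs)) := hxsmin _ hmid
    have hcomb := hfcomb xs (admmEnc S') (1 / 2) (by norm_num) (by norm_num)
    have hz : ‖xs - admmEnc S'‖ ^ 2 ≤ 0 := by linarith [hfm, hcomb, hf1, hf2]
    have h0 : ‖xs - admmEnc S'‖ = 0 := by nlinarith [norm_nonneg (xs - admmEnc S'), hz]
    have h1 : xs - admmEnc S' = 0 := norm_eq_zero.mp h0
    have h2 : admmEnc S' = xs := (sub_eq_zero.mp h1).symm
    calc S' = admmDec (admmEnc S') := (admmDec_enc S').symm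
      _ = admmDec xs := by rw [h2]
  · have e : (fun k => frobNorm (Sseq k - admmDec xs))
        = fun k => ‖admmEnc (Sseq k) - xs‖ := by
      funext k
      rw [frob_enc, admmEnc_sub, admmEnc_dec]
    rw [e]
    exact hna
  · refine (tendsto_add_atTop_iff_nat
      (f := fun k => frobNorm (Yseq k - admmDec xs)) 1).mp ?_
    have e : (fun k => frobNorm (Yseq (k + 1) - admmDec xs))
        = fun k => ‖admmEnc (Yseq (k + 1)) - xs‖ := by
      funext k
      rw [frob_enc, admmEnc_sub, admmEnc_dec]
    rw [e]
    exact hnc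
end
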